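/- arXiv:1108.2801 — 7 statements merged into one kernel-verified Lean document; each statement's English description precedes it below -/
import Mathlib

section
/- Let h : ℂ \ {0} → ℂ \ {0} be an injective holomorphic map of the punctured plane to itself. Then there exists a non-zero constant c such that either h(z) = c·z for all z ≠ 0, or h(z) = c/z for all z ≠ 0. -/
open Filter Topology Metric Bornology Set Function Complex

/-- Differentiability of an update away from the updated point. -/
lemma updateDiffAux {f : ℂ → ℂ} {L : ℂ} {z : ℂ} (hz : z ≠ 0)
    (hd : DifferentiableAt ℂ f z) : DifferentiableAt ℂ (update f 0 L) z := by
  apply hd.congr_of_eventuallyEq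
  filter_upwards [isOpen_ne.mem_nhds hz] with w hw
  exact update_of_ne hw _ _

/-- Removable singularity extension. -/
lemma extendDiffAux {f : ℂ → ℂ} {L : ℂ}
    (hd : ∀ z : ℂ, z ≠ 0 → DifferentiableAt ℂ f z)
    (hL : Tendsto f (𝓝[≠] (0:ℂ)) (𝓝 L)) :
    Differentiable ℂ (update f 0 L) := by
  intro z
  rcases eq_or_ne z 0 with rfl | hz
  · refine (Complex.analyticAt_of_differentiable_on_punctured_nhds_of_continuousAt ?_
      (continuousAt_update_same.mpr hL)).differentiableAt
    filter_upwards [self_mem_nhdsWithin] with w hw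
    exact updateDiffAux hw (hd w hw)
  · exact updateDiffAux hz (hd z hz)

/-- The dichotomy at the puncture: either a finite limit, or the norm blows up. -/
lemma dichotomyAux (h : ℂ → ℂ)
    (hmaps : ∀ z : ℂ, z ≠ 0 → h z ≠ 0)
    (hinj : ∀ z w : ℂ, z ≠ 0 → w ≠ 0 → h z = h w → z = w)
    (hdiff : ∀ z : ℂ, z ≠ 0 → DifferentiableAt ℂ h z) :
    (∃ L : ℂ, Tendsto h (𝓝[≠] (0:ℂ)) (𝓝 L)) ∨
      Tendsto (fun z => ‖h z‖) (𝓝[≠] (0:ℂ)) atTop := by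
  have hA : ∀ z : ℂ, z ≠ 0 → AnalyticAt ℂ h z := fun z hz =>
    DifferentiableOn.analyticAt
      (fun w hw => (hdiff w hw).differentiableWithinAt) (isOpen_ne.mem_nhds hz)
  have h20 : (2:ℂ) ≠ 0 := by norm_num
  rcases (hA 2 h20).eventually_constant_or_nhds_le_map_nhds with hc | hle
  · exfalso
    have h1 : ∀ᶠ z in 𝓝[≠] (2:ℂ), h z = h 2 := hc.filter_mono nhdsWithin_le_nhds
    have h2' : ∀ᶠ z in 𝓝[≠] (2:ℂ), z ≠ 0 :=
      eventually_nhdsWithin_of_eventually_nhds (isOpen_ne.mem_nhds h20)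
    obtain ⟨z, hz1, hz2, hz3⟩ := (h1.and (h2'.and self_mem_nhdsWithin)).exists
    exact hz3 (hinj z 2 hz2 h20 hz1)
  have himg : h '' ball 2 (1/2) ∈ 𝓝 (h 2) :=
    hle (image_mem_map (ball_mem_nhds _ (by norm_num)))
  obtain ⟨r, hr, hrsub⟩ := Metric.mem_nhds_iff.mp himg
  -- near 0, h avoids the ball around h 2
  have hkey : ∀ z : ℂ, z ≠ 0 → z ∈ ball (0:ℂ) 1 → r ≤ ‖h z - h 2‖ := by
    intro z hz hzb
    by_contra hlt
    push_neg at hlt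
    have : h z ∈ ball (h 2) r := by rw [mem_ball, dist_eq_norm]; exact hlt
    obtain ⟨w, hw, hweq⟩ := hrsub this
    have hw0 : w ≠ 0 := by
      intro h0
      rw [h0] at hw
      simp only [mem_ball, dist_zero_left] at hw
      norm_num at hw
    have hzw := hinj z w hz hw0 hweq.symm
    subst hzw
    have h1 : ‖z‖ < 1 := by simpa using hzb
    have h3 : dist z 2 < 1/2 := hw
    have h4 : dist (0:ℂ) 2 ≤ dist 0 z + dist z 2 := dist_triangle _ _ _
    have h5 : dist (0:ℂ) 2 = 2 := by
      simp [dist_eq_norm]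
    have h6 : dist (0:ℂ) z = ‖z‖ := by
      simp [dist_eq_norm]
    rw [h5, h6] at h4
    linarith
  -- the bounded auxiliary function
  set g : ℂ → ℂ := fun z => (h z - h 2)⁻¹ with hg
  have hne : ∀ z : ℂ, z ≠ 0 → z ∈ ball (0:ℂ) 1 → h z - h 2 ≠ 0 := by
    intro z hz hzb h0
    have := hkey z hz hzb
    rw [h0] at this
    simp at this
    linarith
  have hgd : DifferentiableOn ℂ g (ball (0:ℂ) 1 \ {0}) := by
    intro z hz
    exact (((hdiff z hz.2).sub_const (h 2)).inv (hne z hz.2 hz.1)).differentiableWithinAt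
  have hbdd : BddAbove (norm ∘ g '' (ball (0:ℂ) 1 \ {0})) := by
    refine ⟨r⁻¹, ?_⟩
    rintro x ⟨z, hz, rfl⟩
    simp only [comp_apply, hg, norm_inv]
    exact inv_anti₀ hr (hkey z hz.2 hz.1)
  have hGd := Complex.differentiableOn_update_limUnder_of_bddAbove
    (ball_mem_nhds (0:ℂ) one_pos) hgd hbdd
  set m := limUnder (𝓝[≠] (0:ℂ)) g with hm
  have htg : Tendsto g (𝓝[≠] (0:ℂ)) (𝓝 m) :=
    continuousAt_update_same.mp
      ((hGd.differentiableAt (ball_mem_nhds _ one_pos)).continuousAt)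
  have hball : ∀ᶠ z in 𝓝[≠] (0:ℂ), z ∈ ball (0:ℂ) 1 :=
    eventually_nhdsWithin_of_eventually_nhds (ball_mem_nhds (0:ℂ) one_pos)
  by_cases hm0 : m = 0
  · right
    have h1 : Tendsto (fun z => ‖g z‖) (𝓝[≠] (0:ℂ)) (𝓝[>] (0:ℝ)) := by
      rw [tendsto_nhdsWithin_iff]
      constructor
      · have := htg.norm
        rw [hm0, norm_zero] at this
        exact this
      · filter_upwards [hball, self_mem_nhdsWithin] with z hz1 hz2
        exact mem_Ioi.mpr (norm_pos_iff.mpr (inv_ne_zero (hne z hz2 hz1)))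
    have h2 : Tendsto (fun z => ‖g z‖⁻¹) (𝓝[≠] (0:ℂ)) atTop := by
      have := h1.inv_tendsto_nhdsGT_zero
      exact this
    have h3 : Tendsto (fun z => ‖h z - h 2‖) (𝓝[≠] (0:ℂ)) atTop := by
      apply h2.congr
      intro z
      simp [hg, norm_inv]
    have h4 : Tendsto (fun z => ‖h z - h 2‖ - ‖h 2‖) (𝓝[≠] (0:ℂ)) atTop :=
      tendsto_atTop_add_const_right _ (-‖h 2‖) h3
    apply tendsto_atTop_mono _ h4
    intro z
    have := norm_sub_le (h z) (h 2)
    linarith [norm_sub_le (h z) (h 2)]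
  · left
    refine ⟨h 2 + m⁻¹, ?_⟩
    have h1 : Tendsto (fun z => h 2 + (g z)⁻¹) (𝓝[≠] (0:ℂ)) (𝓝 (h 2 + m⁻¹)) :=
      tendsto_const_nhds.add (htg.inv₀ hm0)
    apply h1.congr'
    filter_upwards [hball, self_mem_nhdsWithin] with z hz1 hz2
    rw [hg]
    simp only [inv_inv]
    ring



/-- An injective entire function has nonvanishing derivative at 0. -/
lemma injDerivAux {f : ℂ → ℂ} (hd : Differentiable ℂ f) (hi : Function.Injective f) :
    deriv f 0 ≠ 0 := by
  intro hder
  -- work with f₀ = f - f 0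
  set f₀ : ℂ → ℂ := fun z => f z - f 0 with hf₀
  have hd₀ : Differentiable ℂ f₀ := fun z => (hd z).sub_const _
  have ha₀ : AnalyticAt ℂ f₀ 0 :=
    DifferentiableOn.analyticAt (hd₀.differentiableOn) univ_mem
  have hder₀ : deriv f₀ 0 = 0 := by
    rw [hf₀]
    rw [deriv_sub_const]
    exact hder
  have hnc : ¬ (∀ᶠ z in 𝓝 (0:ℂ), f₀ z = 0) := by
    intro hev
    have h1 : ∀ᶠ z in 𝓝[≠] (0:ℂ), f₀ z = 0 := hev.filter_mono nhdsWithin_le_nhds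
    obtain ⟨z, hz1, hz2⟩ := (h1.and self_mem_nhdsWithin).exists
    have : f z = f 0 := by
      have := hz1
      simp only [hf₀, sub_eq_zero] at this
      exact this
    exact hz2 (hi this)
  obtain ⟨n, g, hg, hg0, hfeq⟩ := (ha₀.exists_eventuallyEq_pow_smul_nonzero_iff).mpr hnc
  simp only [sub_zero, smul_eq_mul] at hfeq
  -- n ≠ 0
  have hn0 : n ≠ 0 := by
    intro h0
    have := hfeq.self_of_nhds
    rw [h0] at this
    simp [hf₀] at this
    exact hg0 this.symm
  -- n ≠ 1
  have hn1 : n ≠ 1 := by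
    intro h1
    subst h1
    have hEE : f₀ =ᶠ[𝓝 (0:ℂ)] (fun z => z ^ 1 * g z) := hfeq
    have hderiv_eq : deriv f₀ 0 = deriv (fun z => z ^ 1 * g z) 0 := hEE.deriv_eq
    have hgd : HasDerivAt (fun z => z ^ 1 * g z) (g 0) 0 := by
      have h2 : HasDerivAt (fun z : ℂ => z) 1 0 := hasDerivAt_id 0
      have h3 : HasDerivAt g (deriv g 0) 0 := hg.differentiableAt.hasDerivAt
      have := (h2.mul h3)
      simpa [Pi.mul_def] using this.congr_deriv (by ring)
    rw [hderiv_eq] at hder₀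
    rw [hgd.deriv] at hder₀
    exact hg0 hder₀
  have hn2 : 2 ≤ n := by omega
  -- construct n-th root of g near 0
  have hgne : g 0 ≠ 0 := hg0
  set b : ℂ := (g 0) ^ ((n : ℂ)⁻¹) with hb
  have hbn : b ^ n = g 0 := Complex.cpow_nat_inv_pow _ hn0
  have hb0 : b ≠ 0 := by
    intro h0
    rw [h0] at hbn
    rw [zero_pow hn0] at hbn
    exact hgne hbn.symm
  set r : ℂ → ℂ := fun z => b * (g z / g 0) ^ ((n : ℂ)⁻¹) with hrdef
  have hrn : ∀ z : ℂ, r z ^ n = g z := by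
    intro z
    rw [hrdef]
    rw [mul_pow, Complex.cpow_nat_inv_pow _ hn0, Complex.cpow_nat_inv_pow _ hn0]
    field_simp
  have hra : AnalyticAt ℂ r 0 := by
    apply AnalyticAt.mul analyticAt_const
    apply AnalyticAt.cpow (hg.div analyticAt_const hgne) analyticAt_const
    simpa [div_self hgne] using Complex.one_mem_slitPlane
  have hr0 : r 0 = b := by
    rw [hrdef]
    simp [div_self hgne, Complex.one_cpow]
  -- φ z = z * r z
  set φ : ℂ → ℂ := fun z => z * r z with hφdef
  have hφa : AnalyticAt ℂ φ 0 := (analyticAt_id).mul hra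
  have hφ0 : φ 0 = 0 := by simp [hφdef]
  have hφs : HasStrictDerivAt φ b 0 := by
    have h1 := hφa.hasStrictFDerivAt.hasStrictDerivAt
    have h2 : deriv φ 0 = b := by
      have h3 : HasDerivAt φ (1 * r 0 + 0 * deriv r 0) 0 :=
        (hasDerivAt_id 0).mul hra.differentiableAt.hasDerivAt
      rw [h3.deriv, hr0]; ring
    have h4 : fderiv ℂ φ 0 1 = deriv φ 0 := rfl
    rw [h4, h2] at h1
    exact h1
  -- local inverse
  set E := hφs.hasStrictFDerivAt_equiv hb0 with hE
  have hinv : ∀ᶠ w in 𝓝 (0:ℂ), φ (E.localInverse φ _ 0 w) = w := by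
    have := E.eventually_right_inverse
    rwa [hφ0] at this
  have hcont : Tendsto (E.localInverse φ _ 0) (𝓝 (0:ℂ)) (𝓝 (0:ℂ)) := by
    have h1 := E.localInverse_continuousAt
    rw [hφ0] at h1
    have h2 := E.localInverse_apply_image
    rw [hφ0] at h2
    rw [ContinuousAt, h2] at h1
    exact h1
  -- f₀ = φ ^ n eventually
  have hfφ : ∀ᶠ z in 𝓝 (0:ℂ), f₀ z = φ z ^ n := by
    filter_upwards [hfeq] with z hz
    rw [hz, hφdef]
    simp only [mul_pow]
    rw [hrn z]
  -- pull back along the local inverse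
  have hP : ∀ᶠ w in 𝓝 (0:ℂ),
      φ (E.localInverse φ _ 0 w) = w ∧ f₀ (E.localInverse φ _ 0 w) =
        φ (E.localInverse φ _ 0 w) ^ n :=
    hinv.and (hcont.eventually hfφ)
  obtain ⟨ε, hε, hball⟩ := Metric.eventually_nhds_iff_ball.mp hP
  -- the root of unity
  set ζ : ℂ := Complex.exp ((2 * Real.pi / n : ℝ) * Complex.I) with hζ
  have hζn : ζ ^ n = 1 := by
    rw [hζ, ← Complex.exp_nat_mul]
    have : (n : ℂ) * ((2 * Real.pi / n : ℝ) * Complex.I) = 2 * Real.pi * Complex.I := by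
      push_cast
      have : (n : ℂ) ≠ 0 := Nat.cast_ne_zero.mpr hn0
      field_simp
    rw [this, Complex.exp_two_pi_mul_I]
  have hζ1 : ζ ≠ 1 := by
    rw [hζ]
    intro h1
    obtain ⟨k, hk⟩ := Complex.exp_eq_one_iff.mp h1
    have him := congrArg Complex.im hk
    simp only [Complex.ofReal_mul, Complex.mul_im, Complex.ofReal_re, Complex.I_im,
      Complex.ofReal_im, Complex.I_re] at him
    have hnR : (0:ℝ) < n := by positivity
    have hpi : (0:ℝ) < Real.pi := Real.pi_pos
    -- him : 2 * π / n = k * (2 * π)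
    have hkval : (k : ℝ) = 1 / n := by
      have e : ((2 * Real.pi / n : ℝ) : ℂ) = ((k * (2 * Real.pi) : ℝ) : ℂ) := by
        apply mul_right_cancel₀ Complex.I_ne_zero
        rw [hk]; push_cast; ring
      have e2 := Complex.ofReal_injective e
      rw [div_eq_iff hnR.ne'] at e2
      rw [eq_div_iff hnR.ne']
      have e3 : (2 * Real.pi) * ((k:ℝ) * n - 1) = 0 := by linear_combination -e2
      rcases mul_eq_zero.mp e3 with h5 | h5
      · linarith
      · linarith
    have hk1 : (k:ℝ) < 1 := by
      rw [hkval]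
      rw [div_lt_one hnR]
      exact_mod_cast by omega
    have hk0 : (0:ℝ) < k := by
      rw [hkval]; positivity
    have : (0:ℤ) < k := by exact_mod_cast hk0
    have : (1:ℤ) ≤ k := this
    have : (1:ℝ) ≤ (k:ℝ) := by exact_mod_cast this
    linarith
  have hζabs : ‖ζ‖ = 1 := Complex.norm_exp_ofReal_mul_I _
  -- pick the witness point
  set w₀ : ℂ := ((ε/2 : ℝ) : ℂ) with hw₀
  have hw₀0 : w₀ ≠ 0 := by
    simp [hw₀]
    positivity
  have hw₀mem : w₀ ∈ ball (0:ℂ) ε := by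
    simp only [mem_ball, dist_zero_right, hw₀, Complex.norm_real, Real.norm_eq_abs]
    rw [abs_of_pos (by positivity : (0:ℝ) < ε/2)]
    linarith
  have hζw₀mem : ζ * w₀ ∈ ball (0:ℂ) ε := by
    simp only [mem_ball, dist_zero_right]
    rw [norm_mul]
    have : ‖ζ‖ = 1 := hζabs
    rw [this, one_mul]
    simpa only [mem_ball, dist_zero_right] using hw₀mem
  obtain ⟨hφ1, hf1⟩ := hball w₀ hw₀mem
  obtain ⟨hφ2, hf2⟩ := hball (ζ * w₀) hζw₀mem
  set z₁ := E.localInverse φ _ 0 w₀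
  set z₂ := E.localInverse φ _ 0 (ζ * w₀)
  have hfz : f z₁ = f z₂ := by
    have h1 : f₀ z₁ = w₀ ^ n := by rw [hf1, hφ1]
    have h2 : f₀ z₂ = w₀ ^ n := by
      rw [hf2, hφ2, mul_pow, hζn, one_mul]
    have : f₀ z₁ = f₀ z₂ := by rw [h1, h2]
    simpa [hf₀, sub_eq_sub_iff_sub_eq_sub] using this
  have hz12 : z₁ = z₂ := hi hfz
  have hφeq : φ z₁ = φ z₂ := by rw [hz12]
  have hww : w₀ = ζ * w₀ := by rw [hφ1, hφ2] at hφeq; exact hφeq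
  have hcancel : ζ * w₀ = 1 * w₀ := by rw [one_mul, ← hww]
  exact hζ1 (mul_right_cancel₀ hw₀0 hcancel)

lemma coboundedNeAux : ∀ᶠ z : ℂ in cobounded ℂ, z ≠ 0 := by
  filter_upwards [tendsto_norm_cobounded_atTop.eventually_gt_atTop 0] with z hz
  exact norm_pos_iff.mp hz

/-- The case of a finite limit at 0 and a pole at infinity gives a linear map. -/
lemma linAux (h : ℂ → ℂ)
    (hmaps : ∀ z : ℂ, z ≠ 0 → h z ≠ 0)
    (hinj : ∀ z w : ℂ, z ≠ 0 → w ≠ 0 → h z = h w → z = w)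
    (hdiff : ∀ z : ℂ, z ≠ 0 → DifferentiableAt ℂ h z)
    (L : ℂ) (h0 : Tendsto h (𝓝[≠] (0:ℂ)) (𝓝 L))
    (hinf : Tendsto (fun z => ‖h z‖) (cobounded ℂ) atTop) :
    ∃ c : ℂ, c ≠ 0 ∧ ∀ z : ℂ, z ≠ 0 → h z = c * z := by
  set H := update h 0 L with hHdef
  have HD : Differentiable ℂ H := extendDiffAux hdiff h0
  have HH : ∀ z : ℂ, z ≠ 0 → H z = h z := fun z hz => update_of_ne hz _ _
  have hnormH : Tendsto (fun z => ‖H z‖) (cobounded ℂ) atTop := by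
    apply hinf.congr'
    filter_upwards [coboundedNeAux] with z hz
    rw [HH z hz]
  -- L = 0
  have hL0 : L = 0 := by
    by_contra hL
    have hHne : ∀ z : ℂ, H z ≠ 0 := by
      intro z
      rcases eq_or_ne z 0 with rfl | hz
      · rw [hHdef, update_self]; exact hL
      · rw [HH z hz]; exact hmaps z hz
    have FD : Differentiable ℂ (fun z => (H z)⁻¹) := fun z => (HD z).inv (hHne z)
    have hFt : Tendsto (fun z => (H z)⁻¹) (cobounded ℂ) (𝓝 0) := by
      rw [tendsto_zero_iff_norm_tendsto_zero]
      have h2 := hnormH.inv_tendsto_atTop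
      apply h2.congr
      intro z
      simp [norm_inv]
    have := FD.apply_eq_of_tendsto_cocompact 0 (by rw [← cobounded_eq_cocompact (α := ℂ)]; exact hFt)
    rw [hHdef, update_self] at this
    exact hL (inv_eq_zero.mp this)
  have H0 : H 0 = 0 := by rw [hHdef, update_self, hL0]
  -- the function K
  set K' : ℂ → ℂ := fun z => (h z⁻¹)⁻¹ with hK'def
  have hK'd : ∀ z : ℂ, z ≠ 0 → DifferentiableAt ℂ K' z := by
    intro z hz
    have h1 : DifferentiableAt ℂ (fun w : ℂ => h w⁻¹) z :=
      (hdiff _ (inv_ne_zero hz)).comp z (differentiableAt_inv hz)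
    exact h1.inv (hmaps _ (inv_ne_zero hz))
  have hK'0 : Tendsto K' (𝓝[≠] (0:ℂ)) (𝓝 0) := by
    rw [tendsto_zero_iff_norm_tendsto_zero]
    have h1 : Tendsto (fun z : ℂ => ‖h z⁻¹‖) (𝓝[≠] (0:ℂ)) atTop :=
      hinf.comp tendsto_inv₀_nhdsNE_zero
    have h2 := h1.inv_tendsto_atTop
    apply h2.congr
    intro z
    simp [hK'def, norm_inv]
  set K := update K' 0 0 with hKdef
  have KD : Differentiable ℂ K := extendDiffAux hK'd hK'0
  have hKne : ∀ z : ℂ, z ≠ 0 → K z ≠ 0 := by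
    intro z hz
    rw [hKdef, update_of_ne hz]
    exact inv_ne_zero (hmaps _ (inv_ne_zero hz))
  have hK0 : K 0 = 0 := by rw [hKdef, update_self]
  have hKinj : Function.Injective K := by
    intro z w hzw
    rcases eq_or_ne z 0 with rfl | hz
    · rcases eq_or_ne w 0 with rfl | hw
      · rfl
      · exact absurd (hzw.symm.trans hK0) (hKne w hw)
    · rcases eq_or_ne w 0 with rfl | hw
      · exact absurd (hzw.trans hK0) (hKne z hz)
      · rw [hKdef, update_of_ne hz, update_of_ne hw, hK'def] at hzw
        have h1 : h z⁻¹ = h w⁻¹ := inv_injective hzw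
        have h2 := hinj _ _ (inv_ne_zero hz) (inv_ne_zero hw) h1
        exact inv_injective h2
  have hb : deriv K 0 ≠ 0 := injDerivAux KD hKinj
  set b := deriv K 0 with hbdef
  -- slope limits
  have hKslope : Tendsto (fun z => K z / z) (𝓝[≠] (0:ℂ)) (𝓝 b) := by
    have h1 : HasDerivAt K b 0 := (KD 0).hasDerivAt
    have h2 := hasDerivAt_iff_tendsto_slope.mp h1
    apply h2.congr
    intro z
    rw [slope_def_field, hK0, sub_zero, sub_zero]
  have hHslope : Tendsto (fun z => H z / z) (𝓝[≠] (0:ℂ)) (𝓝 (deriv H 0)) := by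
    have h1 : HasDerivAt H (deriv H 0) 0 := (HD 0).hasDerivAt
    have h2 := hasDerivAt_iff_tendsto_slope.mp h1
    apply h2.congr
    intro z
    rw [slope_def_field, H0, sub_zero, sub_zero]
  -- the quotient function u
  set u := update (fun z => H z / z) 0 (deriv H 0) with hudef
  have uD : Differentiable ℂ u :=
    extendDiffAux (fun z hz => (HD z).div differentiableAt_id hz) hHslope
  have hucob : Tendsto u (cobounded ℂ) (𝓝 b⁻¹) := by
    have h1 : Tendsto (fun z : ℂ => K z⁻¹ / z⁻¹) (cobounded ℂ) (𝓝 b) :=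
      hKslope.comp tendsto_inv₀_cobounded'
    have h2 := h1.inv₀ hb
    apply h2.congr'
    filter_upwards [coboundedNeAux] with z hz
    have hzi : z⁻¹ ≠ 0 := inv_ne_zero hz
    rw [hudef, update_of_ne hz, hKdef, update_of_ne hzi, hK'def]
    simp only [inv_inv]
    rw [HH z hz]
    have hhz : h z ≠ 0 := hmaps z hz
    field_simp
  refine ⟨b⁻¹, inv_ne_zero hb, ?_⟩
  intro z hz
  have h3 := uD.apply_eq_of_tendsto_cocompact z (by rw [← cobounded_eq_cocompact (α := ℂ)]; exact hucob)
  rw [hudef, update_of_ne hz, HH z hz] at h3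
  rw [(div_eq_iff hz).mp h3]

/-- An injective holomorphic self-map of the punctured plane ℂ* is either
`z ↦ c·z` or `z ↦ c/z` for some non-zero constant `c`. -/
theorem stmt0 (h : ℂ → ℂ)
    (hmaps : ∀ z : ℂ, z ≠ 0 → h z ≠ 0)
    (hinj : ∀ z w : ℂ, z ≠ 0 → w ≠ 0 → h z = h w → z = w)
    (hdiff : ∀ z : ℂ, z ≠ 0 → DifferentiableAt ℂ h z) :
    ∃ c : ℂ, c ≠ 0 ∧
      ((∀ z : ℂ, z ≠ 0 → h z = c * z) ∨ (∀ z : ℂ, z ≠ 0 → h z = c / z)) := by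
  have D0 := dichotomyAux h hmaps hinj hdiff
  set k : ℂ → ℂ := fun z => h z⁻¹ with hkdef
  have kmaps : ∀ z : ℂ, z ≠ 0 → k z ≠ 0 := fun z hz => hmaps _ (inv_ne_zero hz)
  have kinj : ∀ z w : ℂ, z ≠ 0 → w ≠ 0 → k z = k w → z = w := by
    intro z w hz hw hzw
    exact inv_injective (hinj _ _ (inv_ne_zero hz) (inv_ne_zero hw) hzw)
  have kdiff : ∀ z : ℂ, z ≠ 0 → DifferentiableAt ℂ k z := fun z hz =>
    (hdiff _ (inv_ne_zero hz)).comp z (differentiableAt_inv hz)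
  have Dinf := dichotomyAux k kmaps kinj kdiff
  have hk : ∀ z : ℂ, z ≠ 0 → k z⁻¹ = h z := by
    intro z hz; rw [hkdef]; simp
  rcases D0 with ⟨L0, hL0⟩ | htop0
  · rcases Dinf with ⟨M, hM⟩ | htopinf
    · -- both finite : Liouville contradiction
      exfalso
      have hHcob : Tendsto h (cobounded ℂ) (𝓝 M) := by
        have h1 : Tendsto (fun z : ℂ => k z⁻¹) (cobounded ℂ) (𝓝 M) :=
          hM.comp tendsto_inv₀_cobounded'
        apply h1.congr'
        filter_upwards [coboundedNeAux] with z hz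
        exact hk z hz
      set H := update h 0 L0 with hHdef
      have HD : Differentiable ℂ H := extendDiffAux hdiff hL0
      have hHcob' : Tendsto H (cobounded ℂ) (𝓝 M) := by
        apply hHcob.congr'
        filter_upwards [coboundedNeAux] with z hz
        exact (update_of_ne hz _ _).symm
      have h1 := HD.apply_eq_of_tendsto_cocompact 1
        (by rw [← cobounded_eq_cocompact (α := ℂ)]; exact hHcob')
      have h2 := HD.apply_eq_of_tendsto_cocompact 2
        (by rw [← cobounded_eq_cocompact (α := ℂ)]; exact hHcob')
      rw [hHdef, update_of_ne one_ne_zero] at h1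
      rw [hHdef, update_of_ne two_ne_zero] at h2
      have := hinj 1 2 one_ne_zero two_ne_zero (h1.trans h2.symm)
      norm_num at this
    · -- linear case
      have hinf : Tendsto (fun z => ‖h z‖) (cobounded ℂ) atTop := by
        have h1 : Tendsto (fun z : ℂ => ‖k z⁻¹‖) (cobounded ℂ) atTop :=
          htopinf.comp tendsto_inv₀_cobounded'
        apply h1.congr'
        filter_upwards [coboundedNeAux] with z hz
        rw [hk z hz]
      obtain ⟨c, hc, hcz⟩ := linAux h hmaps hinj hdiff L0 hL0 hinf
      exact ⟨c, hc, Or.inl hcz⟩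
  · rcases Dinf with ⟨M, hM⟩ | htopinf
    · -- inverse-linear case
      have hkinf : Tendsto (fun z => ‖k z‖) (cobounded ℂ) atTop :=
        htop0.comp tendsto_inv₀_cobounded'
      obtain ⟨c, hc, hcz⟩ := linAux k kmaps kinj kdiff M hM hkinf
      refine ⟨c, hc, Or.inr ?_⟩
      intro z hz
      have h1 := hcz z⁻¹ (inv_ne_zero hz)
      rw [hk z hz] at h1
      rw [h1, div_eq_mul_inv]
    · -- both poles : contradiction
      exfalso
      have hinf : Tendsto (fun z => ‖h z‖) (cobounded ℂ) atTop := by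
        have h1 : Tendsto (fun z : ℂ => ‖k z⁻¹‖) (cobounded ℂ) atTop :=
          htopinf.comp tendsto_inv₀_cobounded'
        apply h1.congr'
        filter_upwards [coboundedNeAux] with z hz
        rw [hk z hz]
      set g : ℂ → ℂ := fun z => (h z)⁻¹ with hgdef
      have hgd : ∀ z : ℂ, z ≠ 0 → DifferentiableAt ℂ g z := fun z hz =>
        (hdiff z hz).inv (hmaps z hz)
      have hg0 : Tendsto g (𝓝[≠] (0:ℂ)) (𝓝 0) := by
        rw [tendsto_zero_iff_norm_tendsto_zero]
        have h2 := htop0.inv_tendsto_atTop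
        apply h2.congr
        intro z
        simp [hgdef, norm_inv]
      set G := update g 0 0 with hGdef
      have GD : Differentiable ℂ G := extendDiffAux hgd hg0
      have hGcob : Tendsto G (cobounded ℂ) (𝓝 0) := by
        rw [tendsto_zero_iff_norm_tendsto_zero]
        have h2 := hinf.inv_tendsto_atTop
        apply h2.congr'
        filter_upwards [coboundedNeAux] with z hz
        simp [hGdef, hgdef, update_of_ne hz, norm_inv]
      have h1 := GD.apply_eq_of_tendsto_cocompact 1
        (by rw [← cobounded_eq_cocompact (α := ℂ)]; exact hGcob)
      rw [hGdef, update_of_ne one_ne_zero] at h1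
      exact hmaps 1 one_ne_zero (inv_eq_zero.mp h1)
end

section
/- For f₀(z) = z + z², the preimage of the annulus 𝔸 = {1/2 < |z+1/2| < 2} under f₀ is contained in 𝔸: if f₀(z) ∈ 𝔸 then z ∈ 𝔸. -/
/-- For `f₀(z) = z + z²` the preimage of the annulus `𝔸 = {1/2 < |z+1/2| < 2}`
is contained in `𝔸`: if `f₀(z) ∈ 𝔸` then `z ∈ 𝔸`. -/
theorem stmt5 (f : ℂ → ℂ) (hf : ∀ z, f z = z + z ^ 2) (z : ℂ)
    (hz : 1/2 < ‖f z + 1/2‖ ∧ ‖f z + 1/2‖ < 2) :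
    1/2 < ‖z + 1/2‖ ∧ ‖z + 1/2‖ < 2 := by
  obtain ⟨h1, h2⟩ := hz
  have key : f z + 1/2 = (z + 1/2) ^ 2 + 1/4 := by rw [hf]; ring
  rw [key] at h1 h2
  set w := ‖z + 1/2‖ with hw
  have hw0 : 0 ≤ w := norm_nonneg _
  have habs14 : ‖(1/4 : ℂ)‖ = 1/4 := by
    norm_num
  constructor
  · by_contra h
    push_neg at h
    have : ‖(z + 1/2) ^ 2 + 1/4‖ ≤ w ^ 2 + 1/4 := by
      calc ‖(z + 1/2) ^ 2 + 1/4‖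
          ≤ ‖(z + 1/2) ^ 2‖ + ‖(1/4 : ℂ)‖ :=
            norm_add_le _ _
        _ = w ^ 2 + 1/4 := by rw [norm_pow, habs14]
    nlinarith
  · by_contra h
    push_neg at h
    have h3 : ‖(z + 1/2) ^ 2‖
        ≤ ‖(z + 1/2) ^ 2 + 1/4‖ + 1/4 := by
      calc ‖(z + 1/2) ^ 2‖
          = ‖((z + 1/2) ^ 2 + 1/4) + (-(1/4) : ℂ)‖ := by ring_nf
        _ ≤ ‖(z + 1/2) ^ 2 + 1/4‖ + ‖(-(1/4) : ℂ)‖ :=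
            norm_add_le _ _
        _ = ‖(z + 1/2) ^ 2 + 1/4‖ + 1/4 := by
            rw [norm_neg, habs14]
    rw [norm_pow] at h3
    nlinarith
end

section
/- Let G be the branch of the inverse of K(z) = z/(z-1)² that fixes 0, defined on ℂ \ (-∞, -1/4]. Then G maps the open upper half-plane into itself, maps the open lower half-plane into itself, and maps ℂ \ (-∞, 0] into itself. -/
/-- Let `G` be the branch of the inverse of `K(z) = z/(z-1)²` fixing `0`, defined
and holomorphic on `ℂ \ (-∞, -1/4]`.  Then `G` maps the open upper half-plane into
itself, the open lower half-plane into itself, and `ℂ \ (-∞, 0]` into itself. -/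
theorem stmt10 (K G : ℂ → ℂ) (hK : ∀ z, K z = z / (z - 1) ^ 2)
    (dom : Set ℂ) (hdom : dom = {z : ℂ | ¬ ∃ x : ℝ, x ≤ -(1/4) ∧ z = (x : ℂ)})
    (hG : DifferentiableOn ℂ G dom)
    (hGK : ∀ z ∈ dom, K (G z) = z)
    (hG0 : G 0 = 0) :
    (∀ z : ℂ, 0 < z.im → 0 < (G z).im) ∧
    (∀ z : ℂ, z.im < 0 → (G z).im < 0) ∧
    (∀ z : ℂ, (¬ ∃ x : ℝ, x ≤ 0 ∧ z = (x : ℂ)) → ¬ ∃ x : ℝ, x ≤ 0 ∧ G z = (x : ℂ)) := by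
  -- 0 ∈ dom
  have hdom0 : (0:ℂ) ∈ dom := by
    rw [hdom]
    rintro ⟨x, hx, h0⟩
    have hx0 : x = 0 := by exact_mod_cast h0.symm
    linarith
  -- nonreal points are in dom
  have hmemim : ∀ z : ℂ, z.im ≠ 0 → z ∈ dom := by
    intro z hz
    rw [hdom]
    rintro ⟨x, hx, rfl⟩
    simp at hz
  -- dom is open
  have hopen : IsOpen dom := by
    rw [hdom]
    have heq : {z : ℂ | ¬∃ x : ℝ, x ≤ -(1/4) ∧ z = (x:ℂ)}
        = (Complex.im ⁻¹' {0} ∩ Complex.re ⁻¹' Set.Iic (-(1/4)))ᶜ := by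
      ext z
      simp only [Set.mem_setOf_eq, Set.mem_compl_iff, Set.mem_inter_iff, Set.mem_preimage,
        Set.mem_singleton_iff, Set.mem_Iic]
      constructor
      · intro h hc
        exact h ⟨z.re, hc.2, (Complex.ext rfl (by simp [hc.1]))⟩
      · rintro h ⟨x, hx, rfl⟩
        exact h ⟨by simp, by simpa using hx⟩
    rw [heq]
    exact ((isClosed_singleton.preimage Complex.continuous_im).inter
      (isClosed_Iic.preimage Complex.continuous_re)).isOpen_compl
  -- if z is not real then G z is not real
  have hGreal : ∀ z ∈ dom, z.im ≠ 0 → (G z).im ≠ 0 := by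
    intro z hzd hzim hG0'
    apply hzim
    have hz := hGK z hzd
    rw [hK] at hz
    have hGr : G z = ((G z).re : ℂ) := Complex.ext rfl (by simp [hG0'])
    rw [hGr] at hz
    have hcast : ((((G z).re : ℝ) : ℂ)) / ((((G z).re : ℝ):ℂ) - 1)^2
        = (((G z).re / ((G z).re - 1)^2 : ℝ) : ℂ) := by push_cast; ring
    have him : (((((G z).re : ℝ):ℂ)) / ((((G z).re : ℝ):ℂ) - 1)^2).im = 0 := by
      rw [hcast]; exact Complex.ofReal_im _
    exact hz ▸ him
  -- the key algebraic identity
  have hmul : ∀ z ∈ dom, z ≠ 0 → G z = z * (G z - 1)^2 := by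
    intro z hzd hz0
    have hz := hGK z hzd
    rw [hK] at hz
    have hne : (G z - 1)^2 ≠ 0 := by
      intro h
      rw [h, div_zero] at hz
      exact hz0 hz.symm
    rw [div_eq_iff hne] at hz
    exact hz
  -- continuity at 0
  have hGc : ContinuousAt G 0 := hG.continuousOn.continuousAt (hopen.mem_nhds hdom0)
  have hcont : ContinuousAt (fun z => ((G z - 1)^2).re) 0 :=
    Complex.continuous_re.continuousAt.comp ((hGc.sub continuousAt_const).pow 2)
  have hval : ((G 0 - 1)^2).re = 1 := by rw [hG0]; norm_num
  have hev : ∀ᶠ z in nhds (0:ℂ), 0 < ((G z - 1)^2).re := by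
    refine hcont.eventually (eventually_gt_nhds ?_)
    show (0:ℝ) < ((G 0 - 1)^2).re
    rw [hval]; norm_num
  obtain ⟨δ, hδ, hball⟩ := Metric.eventually_nhds_iff.mp hev
  -- sign of im (G (s I)) equals sign of s for small s ≠ 0
  have key : ∀ s : ℝ, s ≠ 0 → |s| < δ →
      (G ((s:ℂ) * Complex.I)).im = s * ((G ((s:ℂ) * Complex.I) - 1)^2).re ∧
      0 < ((G ((s:ℂ) * Complex.I) - 1)^2).re := by
    intro s hs hsδ
    set z : ℂ := (s:ℂ) * Complex.I with hzdef
    have hzim : z.im = s := by simp [hzdef]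
    have hzd : z ∈ dom := hmemim z (by rw [hzim]; exact hs)
    have hz0 : z ≠ 0 := by
      intro h
      apply hs
      have := congrArg Complex.im h
      rwa [hzim] at this
    have hdist : dist z 0 < δ := by
      rw [dist_zero_right]
      simpa [hzdef, abs_of_nonneg] using hsδ
    have hpos := hball hdist
    refine ⟨?_, hpos⟩
    have := hmul z hzd hz0
    conv_lhs => rw [this]
    rw [hzdef]
    simp [Complex.mul_im, Complex.mul_re]
  -- sign constancy on half-planes via connectedness
  have hconn : ∀ (S : Set ℂ), Convex ℝ S → (∀ c ∈ S, c.im ≠ 0) →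
      ∀ z₁ ∈ S, ∀ z₂ ∈ S, 0 < (G z₁).im → (G z₂).im < 0 → False := by
    intro S hconv hSim z₁ h₁ z₂ h₂ hg₁ hg₂
    have hsub : S ⊆ dom := fun c hc => hmemim c (hSim c hc)
    have hcg : ContinuousOn (fun w => (G w).im) S :=
      Complex.continuous_im.comp_continuousOn (hG.continuousOn.mono hsub)
    have := hconv.isPreconnected.intermediate_value h₂ h₁ hcg
    obtain ⟨c, hc, hc0⟩ := this ⟨le_of_lt hg₂, le_of_lt hg₁⟩
    exact hGreal c (hsub hc) (hSim c hc) hc0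
  have hδ2 : |δ/2| < δ := by rw [abs_of_pos (by linarith)]; linarith
  have hδ2' : |(-(δ/2))| < δ := by rw [abs_neg, abs_of_pos (by linarith)]; linarith
  -- positive sample point in upper half plane
  have hup : 0 < (G (((δ/2 : ℝ):ℂ) * Complex.I)).im := by
    obtain ⟨heq, hpos⟩ := key (δ/2) (by linarith) hδ2
    rw [heq]
    exact mul_pos (by linarith) hpos
  have hdown : (G (((-(δ/2) : ℝ):ℂ) * Complex.I)).im < 0 := by
    obtain ⟨heq, hpos⟩ := key (-(δ/2)) (by linarith) hδ2'
    rw [heq]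
    exact mul_neg_of_neg_of_pos (by linarith) hpos
  have upper : ∀ z : ℂ, 0 < z.im → 0 < (G z).im := by
    intro z hz
    by_contra hle
    push_neg at hle
    have hzd : z ∈ dom := hmemim z (ne_of_gt hz)
    have hne := hGreal z hzd (ne_of_gt hz)
    have hlt : (G z).im < 0 := lt_of_le_of_ne hle hne
    refine hconn {c : ℂ | 0 < c.im} (convex_halfSpace_im_gt 0) (fun c hc => ne_of_gt hc)
      (((δ/2 : ℝ):ℂ) * Complex.I) ?_ z hz hup hlt
    simp only [Set.mem_setOf_eq, Complex.mul_im]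
    simp [hδ]
  have lower : ∀ z : ℂ, z.im < 0 → (G z).im < 0 := by
    intro z hz
    by_contra hle
    push_neg at hle
    have hzd : z ∈ dom := hmemim z (ne_of_lt hz)
    have hne := hGreal z hzd (ne_of_lt hz)
    have hgt : 0 < (G z).im := lt_of_le_of_ne hle (Ne.symm hne)
    refine hconn {c : ℂ | c.im < 0} (convex_halfSpace_im_lt 0) (fun c hc => ne_of_lt hc)
      z hz ((((-(δ/2)) : ℝ):ℂ) * Complex.I) ?_ hgt hdown
    simp only [Set.mem_setOf_eq, Complex.mul_im]
    simp [hδ]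
  refine ⟨upper, lower, ?_⟩
  intro z hz ⟨x, hx, hgx⟩
  by_cases him : z.im = 0
  · -- z is a positive real
    have hzre : z = ((z.re : ℝ) : ℂ) := Complex.ext rfl (by simp [him])
    have hre : 0 < z.re := by
      by_contra h
      push_neg at h
      exact hz ⟨z.re, h, hzre⟩
    have hzd : z ∈ dom := by
      rw [hdom]
      rintro ⟨y, hy, hzy⟩
      have : z.re = y := by rw [hzy]; simp
      linarith
    have hKz := hGK z hzd
    rw [hK, hgx] at hKz
    have hrez : z.re = x / (x - 1)^2 := by
      rw [← hKz]
      rw [show ((x:ℂ)) / ((x:ℂ) - 1)^2 = ((x / (x - 1)^2 : ℝ) : ℂ) from by push_cast; ring]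
      exact Complex.ofReal_re _
    have hsq : (0:ℝ) < (x - 1)^2 := by nlinarith
    have hxeq : x = z.re * (x - 1)^2 := by
      rw [hrez, div_mul_cancel₀ _ (ne_of_gt hsq)]
    nlinarith
  · rcases lt_or_gt_of_ne him with h | h
    · have := lower z h
      rw [hgx] at this
      simp at this
    · have := upper z h
      rw [hgx] at this
      simp at this
end

section
/- Let F be holomorphic near ∞ with |F(w) - w - 1| < sin(π - α) for all w in the translated sector Δ(α,R) = { w : |Arg(w - R)| < α }, where π/2 < α < π and R > 0, and assume also Re F(w) > Re w + 1/2 on Δ(α,R). Then F maps the closure of Δ(α,R) into Δ(α,R), and Fⁿ(w) → ∞ for every w ∈ Δ(α,R). -/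
open Filter

/-- Sector invariance: let `Δ(α,R) = {w : |Arg(w - R)| < α}` with `π/2 < α < π`,
`R > 0`.  If `F` is holomorphic on (a neighborhood of) the closed sector and
satisfies `|F(w) - w - 1| < sin(π - α)` and `Re F(w) > Re w + 1/2` on the closed
sector, then `F` maps the closure of `Δ(α,R)` into `Δ(α,R)`, and `Fⁿ(w) → ∞`
for every `w ∈ Δ(α,R)`. -/
theorem stmt12 (F : ℂ → ℂ) (α R : ℝ)
    (hα1 : Real.pi / 2 < α) (hα2 : α < Real.pi) (hR : 0 < R)
    (Δ : Set ℂ) (hΔ : Δ = {w : ℂ | w ≠ (R : ℂ) ∧ |Complex.arg (w - (R : ℂ))| < α})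
    (hhol : DifferentiableOn ℂ F (closure Δ))
    (hbound : ∀ w ∈ closure Δ, ‖F w - w - 1‖ < Real.sin (Real.pi - α))
    (hre : ∀ w ∈ closure Δ, w.re + 1/2 < (F w).re) :
    (∀ w ∈ closure Δ, F w ∈ Δ) ∧
    (∀ w ∈ Δ, Tendsto (fun n => ‖F^[n] w‖) atTop atTop) := by
  have hπ := Real.pi_pos
  have hc : Real.cos α < 0 := Real.cos_neg_of_pi_div_two_lt_of_lt hα1 (by linarith)
  set s := Real.sin (Real.pi - α) with hsdef
  have hs0 : 0 < s := Real.sin_pos_of_pos_of_lt_pi (by linarith) (by linarith)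
  have hcs : (Real.cos α)^2 + s^2 = 1 := by
    rw [hsdef, Real.sin_pi_sub]
    have := Real.sin_sq_add_cos_sq α; linarith
  have hs1 : s < 1 := by nlinarith [sq_nonneg (Real.cos α)]
  -- characterization via abs/re
  set S : Set ℂ := {w : ℂ | ‖w - (R:ℂ)‖ * Real.cos α ≤ (w - (R:ℂ)).re} with hSdef
  have hSclosed : IsClosed S := by
    apply isClosed_le
    · exact (continuous_norm.comp (continuous_id.sub continuous_const)).mul continuous_const
    · exact Complex.continuous_re.comp (continuous_id.sub continuous_const)
  have hΔS : Δ ⊆ S := by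
    intro w hw
    rw [hΔ] at hw
    obtain ⟨hw0, hwarg⟩ := hw
    have hz0 : w - (R:ℂ) ≠ 0 := sub_ne_zero.mpr hw0
    have habs : 0 < ‖w - (R:ℂ)‖ := norm_pos_iff.mpr hz0
    have hca := Complex.cos_arg hz0
    have hcoslt : Real.cos α < Real.cos (Complex.arg (w - (R:ℂ))) := by
      have := Real.cos_lt_cos_of_nonneg_of_le_pi (abs_nonneg _) hα2.le hwarg
      rwa [Real.cos_abs] at this
    have : Real.cos α < (w - (R:ℂ)).re / ‖w - (R:ℂ)‖ := by rw [← hca]; exact hcoslt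
    rw [lt_div_iff₀ habs] at this
    simp only [hSdef, Set.mem_setOf_eq]
    nlinarith
  have hclS : closure Δ ⊆ S := closure_minimal hΔS hSclosed
  -- main invariance step
  have hmain : ∀ w ∈ closure Δ, ‖F w - (R:ℂ)‖ * Real.cos α < (F w - (R:ℂ)).re := by
    intro w hw
    have hS : ‖w - (R:ℂ)‖ * Real.cos α ≤ (w - (R:ℂ)).re := hclS hw
    have hb := hbound w hw
    have hr := hre w hw
    set δ := F w - w with hδdef
    have hδ1 : ‖δ - 1‖ < s := hb
    have hδre : 1/2 < δ.re := by
      have : δ.re = (F w).re - w.re := by rw [hδdef]; simp [Complex.sub_re]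
      linarith
    have h1 : (δ.re - 1)^2 + δ.im^2 < s^2 := by
      have h := pow_lt_pow_left₀ hδ1 (norm_nonneg _) two_ne_zero
      rw [Complex.sq_norm, Complex.normSq_apply] at h
      simp only [Complex.sub_re, Complex.one_re, Complex.sub_im, Complex.one_im] at h
      nlinarith
    have habs2 : ‖δ‖ ^ 2 = δ.re^2 + δ.im^2 := by
      rw [Complex.sq_norm, Complex.normSq_apply]; ring
    have h2 : ((-Real.cos α) * ‖δ‖)^2 < δ.re^2 := by
      have hup : (1 - s^2) * δ.im^2 < s^2 * δ.re^2 := by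
        nlinarith [sq_nonneg (δ.re - 1 + s^2)]
      have : ((-Real.cos α) * ‖δ‖)^2 = (1 - s^2) * (δ.re^2 + δ.im^2) := by
        rw [mul_pow, neg_pow, habs2]; nlinarith
      rw [this]; nlinarith
    have hkey : (-Real.cos α) * ‖δ‖ < δ.re :=
      lt_of_pow_lt_pow_left₀ 2 (by linarith : (0:ℝ) ≤ δ.re) h2
    -- triangle inequality
    have hz' : F w - (R:ℂ) = (w - (R:ℂ)) + δ := by rw [hδdef]; ring
    have htri : ‖w - (R:ℂ)‖ - ‖δ‖ ≤ ‖F w - (R:ℂ)‖ := by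
      have h := abs_norm_sub_norm_le (F w - (R:ℂ)) (w - (R:ℂ))
      have hd : (F w - (R:ℂ)) - (w - (R:ℂ)) = δ := by rw [hδdef]; ring
      rw [hd] at h
      have := abs_le.mp h
      linarith [this.1]
    have hre' : (F w - (R:ℂ)).re = (w - (R:ℂ)).re + δ.re := by
      rw [hz', Complex.add_re]
    have hmul : Real.cos α * ‖F w - (R:ℂ)‖ ≤
        Real.cos α * (‖w - (R:ℂ)‖ - ‖δ‖) :=
      mul_le_mul_of_nonpos_left htri hc.le
    have e1 : Real.cos α * (‖w - (R:ℂ)‖ - ‖δ‖)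
        = ‖w - (R:ℂ)‖ * Real.cos α + (-Real.cos α) * ‖δ‖ := by ring
    have e2 : ‖F w - (R:ℂ)‖ * Real.cos α
        = Real.cos α * ‖F w - (R:ℂ)‖ := by ring
    rw [hre', e2]
    linarith
  -- membership
  have hmem : ∀ w ∈ closure Δ, F w ∈ Δ := by
    intro w hw
    have h := hmain w hw
    have hz0 : F w ≠ (R:ℂ) := by
      intro heq
      rw [heq] at h; simp at h
    have hz0' : F w - (R:ℂ) ≠ 0 := sub_ne_zero.mpr hz0
    have habs : 0 < ‖F w - (R:ℂ)‖ := norm_pos_iff.mpr hz0'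
    rw [hΔ]
    refine ⟨hz0, ?_⟩
    by_contra hcon
    push_neg at hcon
    have h1 : Real.cos (Complex.arg (F w - (R:ℂ))) ≤ Real.cos α := by
      have := Real.cos_le_cos_of_nonneg_of_le_pi (by linarith : (0:ℝ) ≤ α)
        (Complex.abs_arg_le_pi _) hcon
      rwa [Real.cos_abs] at this
    have h2 := Complex.cos_arg hz0'
    rw [h2] at h1
    rw [div_le_iff₀ habs] at h1
    linarith
  refine ⟨hmem, ?_⟩
  intro w hw
  have hiter : ∀ n : ℕ, F^[n] w ∈ closure Δ ∧ w.re + n/2 ≤ (F^[n] w).re := by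
    intro n
    induction n with
    | zero =>
      refine ⟨by simpa using subset_closure hw, ?_⟩
      simp
    | succ n ih =>
      rw [Function.iterate_succ_apply']
      refine ⟨subset_closure (hmem _ ih.1), ?_⟩
      have := hre _ ih.1
      push_cast
      linarith [ih.2]
  have hbnd : Tendsto (fun n : ℕ => w.re + (n:ℝ)/2) atTop atTop := by
    apply tendsto_atTop_add_const_left
    exact (tendsto_natCast_atTop_atTop).atTop_div_const two_pos
  apply tendsto_atTop_mono _ hbnd
  intro n
  exact le_trans (hiter n).2 (Complex.re_le_norm _)
end

section
/- Let f be holomorphic with f(z) = z + z^{n+1} + O(z^{n+2}) near 0 (n ≥ 1), let ν be a unit vector with ν^n = -1 (an attracting direction), and suppose an orbit zₖ = fᵏ(z₀) stays near 0, converges to 0, with zₖ ≠ 0 for all k. If the orbit converges to 0 along a direction, then the limit of zₖ/|zₖ| is one of the n attracting directions, i.e. an n-th root of -1. -/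
open Filter Metric Finset

private lemma stmt13_aux1 (n : ℕ) (a w : ℂ) (ha : a ≠ 0) :
    w / a - 1 = a^n * (1 + (w - a - a^(n+1)) / a^(n+1)) := by
  field_simp
  ring

private lemma stmt13_aux2 (n : ℕ) (a T : ℂ) (ha : a ≠ 0) (hT : T ≠ 0) :
    ((a*T)^n)⁻¹ - (a^n)⁻¹ = -((T-1)/a^n * (∑ j ∈ range n, T^j) / T^n) := by
  have hg := geom_sum_mul T n
  have h1 : a^n ≠ 0 := pow_ne_zero _ ha
  have h2 : T^n ≠ 0 := pow_ne_zero _ hT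
  field_simp [mul_pow]
  linear_combination a^n * T^n * hg

/-- For a parabolic germ `f(z) = z + z^{n+1} + O(z^{n+2})`, if an orbit converges
to `0` (staying near `0` and never hitting `0`) and the direction sequence
`zₖ/|zₖ|` converges to `ν`, then `ν` is an attracting direction: `νⁿ = -1`. -/
theorem stmt13 (f : ℂ → ℂ) (n : ℕ) (hn : 1 ≤ n) (r C : ℝ) (hr : 0 < r)
    (hf : DifferentiableOn ℂ f (ball (0 : ℂ) r))
    (hexp : ∀ z ∈ ball (0 : ℂ) r,
      ‖f z - z - z ^ (n + 1)‖ ≤ C * ‖z‖ ^ (n + 2))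
    (z₀ : ℂ) (horb : ∀ k : ℕ, f^[k] z₀ ∈ ball (0 : ℂ) r ∧ f^[k] z₀ ≠ 0)
    (hlim : Tendsto (fun k => f^[k] z₀) atTop (nhds 0))
    (ν : ℂ)
    (hdir : Tendsto (fun k => f^[k] z₀ / ((‖f^[k] z₀‖ : ℝ) : ℂ))
      atTop (nhds ν)) :
    ν ^ n = -1 := by
  have hn0 : (n : ℂ) ≠ 0 := Nat.cast_ne_zero.2 (by omega)
  set z : ℕ → ℂ := fun k => f^[k] z₀ with hzdef
  have hz0 : ∀ k, z k ≠ 0 := fun k => (horb k).2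
  have hzb : ∀ k, z k ∈ ball (0:ℂ) r := fun k => (horb k).1
  have hznext : ∀ k, z (k+1) = f (z k) := fun k => Function.iterate_succ_apply' f k z₀
  have hzlim : Tendsto z atTop (nhds 0) := hlim
  have habs : Tendsto (fun k => ‖z k‖) atTop (nhds 0) := by
    have := tendsto_zero_iff_norm_tendsto_zero.1 hzlim
    exact this
  -- the relative error term
  set s : ℕ → ℂ := fun k => (f (z k) - z k - (z k)^(n+1)) / (z k)^(n+1) with hsdef
  have hsbound : ∀ k, ‖s k‖ ≤ C * ‖z k‖ := by
    intro k
    have h1 := hexp (z k) (hzb k)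
    have hzpos : 0 < ‖z k‖ := norm_pos_iff.2 (hz0 k)
    have h2 : ‖s k‖ = ‖f (z k) - z k - (z k)^(n+1)‖ / ‖z k‖ ^ (n+1) := by
      simp [hsdef, norm_div, norm_pow]
    rw [h2, div_le_iff₀ (by positivity)]
    calc ‖f (z k) - z k - (z k)^(n+1)‖ ≤ C * ‖z k‖ ^ (n+2) := h1
      _ = C * ‖z k‖ * ‖z k‖ ^ (n+1) := by ring
  have hs0 : Tendsto s atTop (nhds 0) := by
    apply squeeze_zero_norm hsbound
    have := (tendsto_const_nhds (x := C)).mul habs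
    simpa using this
  -- the ratio of consecutive orbit points
  set t : ℕ → ℂ := fun k => f (z k) / z k with htdef
  have ht0 : ∀ k, t k ≠ 0 := fun k => div_ne_zero (hznext k ▸ hz0 (k+1)) (hz0 k)
  have htm1 : ∀ k, t k - 1 = (z k)^n * (1 + s k) :=
    fun k => stmt13_aux1 n (z k) (f (z k)) (hz0 k)
  have ht1 : Tendsto t atTop (nhds 1) := by
    have h2 : Tendsto (fun k => 1 + (z k)^n * (1 + s k)) atTop (nhds (1 + 0^n * (1+0))) :=
      tendsto_const_nhds.add ((hzlim.pow n).mul (tendsto_const_nhds.add hs0))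
    rw [zero_pow (by omega)] at h2
    simp only [zero_mul, add_zero] at h2
    refine h2.congr (fun k => ?_)
    rw [← htm1 k]; ring
  -- key telescoping identity for u k = (z k ^ n)⁻¹
  have key : ∀ k, ((z (k+1))^n)⁻¹ - ((z k)^n)⁻¹
      = -((1 + s k) * (∑ j ∈ range n, (t k)^j) / (t k)^n) := by
    intro k
    have hfz : z (k+1) = z k * t k := by
      have h0 : t k = f (z k) / z k := rfl
      rw [hznext k, h0, mul_comm, div_mul_cancel₀ _ (hz0 k)]
    have h1 : (1 : ℂ) + s k = (t k - 1)/(z k)^n := by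
      rw [htm1 k, mul_comm, mul_div_assoc, div_self (pow_ne_zero n (hz0 k)), mul_one]
    rw [hfz, h1, stmt13_aux2 n (z k) (t k) (hz0 k) (ht0 k)]
  -- the increments converge to -n
  have hS : Tendsto (fun k => ∑ j ∈ range n, (t k)^j) atTop (nhds (n:ℂ)) := by
    have h1 : Tendsto (fun k => ∑ j ∈ range n, (t k)^j) atTop
        (nhds (∑ j ∈ range n, (1:ℂ)^j)) :=
      tendsto_finset_sum _ (fun j _ => ht1.pow j)
    simpa using h1
  have hd : Tendsto (fun k => ((z (k+1))^n)⁻¹ - ((z k)^n)⁻¹) atTop (nhds (-(n:ℂ))) := by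
    have h1 : Tendsto (fun k => -((1 + s k) * (∑ j ∈ range n, (t k)^j) / (t k)^n)) atTop
        (nhds (-((1 + 0) * (n:ℂ) / 1^n))) :=
      (((tendsto_const_nhds.add hs0).mul hS).div (ht1.pow n) (by norm_num)).neg
    simp only [add_zero, one_mul, one_pow, div_one] at h1
    exact h1.congr (fun k => (key k).symm)
  -- Cesàro
  have hces := hd.cesaro_smul
  have hsum : ∀ k, ∑ i ∈ range k, (((z (i+1))^n)⁻¹ - ((z i)^n)⁻¹)
      = ((z k)^n)⁻¹ - ((z 0)^n)⁻¹ := fun k => Finset.sum_range_sub (fun i => ((z i)^n)⁻¹) k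
  have hces2 : Tendsto (fun k : ℕ => (k:ℂ)⁻¹ * (((z k)^n)⁻¹ - ((z 0)^n)⁻¹)) atTop
      (nhds (-(n:ℂ))) := by
    refine hces.congr (fun k => ?_)
    rw [hsum k, Complex.real_smul]
    push_cast
    ring
  have hinvk : Tendsto (fun k : ℕ => (k:ℂ)⁻¹) atTop (nhds 0) := by
    have h1 := (Complex.continuous_ofReal.tendsto 0).comp tendsto_inv_atTop_nhds_zero_nat
    rw [Complex.ofReal_zero] at h1
    refine h1.congr fun k => ?_
    simp [Function.comp_apply]
  have hu : Tendsto (fun k : ℕ => (k:ℂ)⁻¹ * ((z k)^n)⁻¹) atTop (nhds (-(n:ℂ))) := by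
    have h1 := hces2.add (hinvk.mul (tendsto_const_nhds (x := ((z 0)^n)⁻¹)))
    simp only [zero_mul, add_zero] at h1
    refine h1.congr (fun k => ?_)
    ring
  have hnneg : -(n:ℂ) ≠ 0 := neg_ne_zero.2 hn0
  -- k * z k ^ n → (-n)⁻¹
  have hc : Tendsto (fun k : ℕ => (k:ℂ) * (z k)^n) atTop (nhds ((-(n:ℂ))⁻¹)) := by
    have h1 := hu.inv₀ hnneg
    refine h1.congr (fun k => ?_)
    rw [mul_inv, inv_inv, inv_inv]
  -- pass to directions
  set L : ℂ := (-(n:ℂ))⁻¹ with hL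
  have hLne : L ≠ 0 := inv_ne_zero hnneg
  have habsc : Tendsto (fun k : ℕ => ((‖(k:ℂ) * (z k)^n‖ : ℝ) : ℂ)) atTop
      (nhds ((‖L‖ : ℝ) : ℂ)) :=
    (Complex.continuous_ofReal.tendsto _).comp ((continuous_norm.tendsto _).comp hc)
  have habsLne : ((‖L‖ : ℝ) : ℂ) ≠ 0 := by
    simpa using (norm_ne_zero_iff.2 hLne)
  have hratio : Tendsto (fun k : ℕ => ((k:ℂ) * (z k)^n) / ((‖(k:ℂ) * (z k)^n‖ : ℝ) : ℂ))
      atTop (nhds (L / ((‖L‖ : ℝ) : ℂ))) := hc.div habsc habsLne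
  have heq : ∀ᶠ k in atTop, (z k / ((‖z k‖ : ℝ) : ℂ))^n
      = ((k:ℂ) * (z k)^n) / ((‖(k:ℂ) * (z k)^n‖ : ℝ) : ℂ) := by
    filter_upwards [eventually_ge_atTop 1] with k hk
    have hk0 : (k:ℝ) ≠ 0 := Nat.cast_ne_zero.2 (by omega)
    have hkC : (k:ℂ) ≠ 0 := Nat.cast_ne_zero.2 (by omega)
    have habsk : ‖(k:ℂ) * (z k)^n‖ = (k:ℝ) * ‖z k‖ ^ n := by
      rw [norm_mul, norm_pow, Complex.norm_natCast]
    rw [habsk, div_pow, Complex.ofReal_mul, Complex.ofReal_pow, Complex.ofReal_natCast]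
    rw [mul_div_mul_left _ _ hkC]
  have hfinal : Tendsto (fun k => (z k / ((‖z k‖ : ℝ) : ℂ))^n) atTop
      (nhds (L / ((‖L‖ : ℝ) : ℂ))) := hratio.congr' (heq.mono fun k h => h.symm)
  have hpow : Tendsto (fun k => (z k / ((‖z k‖ : ℝ) : ℂ))^n) atTop
      (nhds (ν ^ n)) := hdir.pow n
  have huniq : ν ^ n = L / ((‖L‖ : ℝ) : ℂ) := tendsto_nhds_unique hpow hfinal
  rw [huniq, hL]
  have h1 : ‖(-(n:ℂ))⁻¹‖ = ((n:ℝ))⁻¹ := by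
    rw [norm_inv, norm_neg, Complex.norm_natCast]
  rw [h1]
  have hnR : (n:ℝ) ≠ 0 := Nat.cast_ne_zero.2 (by omega)
  push_cast
  field_simp
end

section
/- Let F(w) = w + 1 + A/w + O(1/w²) near ∞ and suppose Φ is a univalent analytic function on a sector near ∞ satisfying Φ(F(w)) = Φ(w) + 1. Then there is a unique sequence of complex coefficients b₁, b₂, … such that the formal expression Φ_ps(w) = w - A log w + Σ_{j≥1} b_j w^{-j} satisfies Φ_ps(F(w)) = Φ_ps(w) + 1 as formal power series; moreover, for each n, the finite truncation Φ_n(w) = w - A log w + Σ_{j=1}^n b_j w^{-j} satisfies Φ_n(F(w)) - Φ_n(w) - 1 = O(w^{-(n+2)}). -/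
open Filter Finset

open scoped Topology

/-- `VOrd f m c`: `f` is analytic at `0`, vanishes to order at least `m` there,
and the coefficient of `z ^ m` in its expansion is `c`. -/
def VOrd (f : ℂ → ℂ) (m : ℕ) (c : ℂ) : Prop :=
  ∃ φ : ℂ → ℂ, AnalyticAt ℂ φ 0 ∧ φ 0 = c ∧ ∀ᶠ z in 𝓝 (0:ℂ), f z = z ^ m * φ z

lemma vord_of_deriv {f : ℂ → ℂ} (hf : AnalyticAt ℂ f 0) (h0 : f 0 = 0) :
    VOrd f 1 (deriv f 0) := by
  obtain ⟨p, hp⟩ := hf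
  refine ⟨dslope f 0, ⟨p.fslope, hp.has_fpower_series_dslope_fslope⟩, dslope_same f 0, ?_⟩
  refine Eventually.of_forall fun z => ?_
  have := sub_smul_dslope f 0 z
  simp only [sub_zero, h0, smul_eq_mul] at this
  rw [pow_one, this]

lemma VOrd.congr {f f' : ℂ → ℂ} {m : ℕ} {c : ℂ} (h : VOrd f m c) (he : ∀ z, f z = f' z) :
    VOrd f' m c := by
  obtain ⟨φ, hφ, hφ0, heq⟩ := h
  exact ⟨φ, hφ, hφ0, heq.mono fun z hz => (he z) ▸ hz⟩

lemma VOrd.add {f f' : ℂ → ℂ} {m : ℕ} {c c' : ℂ} (h : VOrd f m c) (h' : VOrd f' m c') :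
    VOrd (fun z => f z + f' z) m (c + c') := by
  obtain ⟨φ, hφ, hφ0, heq⟩ := h
  obtain ⟨ψ, hψ, hψ0, heq'⟩ := h'
  refine ⟨fun z => φ z + ψ z, hφ.add hψ, by simp [hφ0, hψ0], ?_⟩
  filter_upwards [heq, heq'] with z h1 h2
  rw [h1, h2]; ring

lemma VOrd.sub {f f' : ℂ → ℂ} {m : ℕ} {c c' : ℂ} (h : VOrd f m c) (h' : VOrd f' m c') :
    VOrd (fun z => f z - f' z) m (c - c') := by
  obtain ⟨φ, hφ, hφ0, heq⟩ := h
  obtain ⟨ψ, hψ, hψ0, heq'⟩ := h'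
  refine ⟨fun z => φ z - ψ z, hφ.sub hψ, by simp [hφ0, hψ0], ?_⟩
  filter_upwards [heq, heq'] with z h1 h2
  rw [h1, h2]; ring

lemma VOrd.const_mul {f : ℂ → ℂ} {m : ℕ} {c : ℂ} (b : ℂ) (h : VOrd f m c) :
    VOrd (fun z => b * f z) m (b * c) := by
  obtain ⟨φ, hφ, hφ0, heq⟩ := h
  refine ⟨fun z => b * φ z, analyticAt_const.mul hφ, by simp [hφ0], ?_⟩
  filter_upwards [heq] with z h1
  rw [h1]; ring

lemma vord_zero (m : ℕ) : VOrd (fun _ => (0:ℂ)) m 0 :=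
  ⟨fun _ => 0, analyticAt_const, rfl, Eventually.of_forall fun z => by simp⟩

lemma VOrd.of_lt {f : ℂ → ℂ} {m m' : ℕ} {c' : ℂ} (h : VOrd f m' c') (hm : m < m') :
    VOrd f m 0 := by
  obtain ⟨φ, hφ, hφ0, heq⟩ := h
  refine ⟨fun z => z ^ (m' - m) * φ z, ((analyticAt_id.pow _)).mul hφ, ?_, ?_⟩
  · simp [Nat.sub_ne_zero_of_lt hm, zero_pow]
  · filter_upwards [heq] with z h1
    rw [h1, ← mul_assoc, ← pow_add, Nat.add_sub_cancel' hm.le]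

lemma VOrd.of_le {f : ℂ → ℂ} {m m' : ℕ} {c' : ℂ} (h : VOrd f m' c') (hm : m ≤ m') :
    ∃ c, VOrd f m c := by
  rcases eq_or_lt_of_le hm with rfl | hlt
  · exact ⟨c', h⟩
  · exact ⟨0, h.of_lt hlt⟩

lemma VOrd.step {f : ℂ → ℂ} {m : ℕ} (h : VOrd f m 0) : ∃ c, VOrd f (m + 1) c := by
  obtain ⟨φ, hφ, hφ0, heq⟩ := h
  obtain ⟨ψ, hψ, hψ0, heq'⟩ := vord_of_deriv hφ hφ0
  refine ⟨deriv φ 0, ψ, hψ, hψ0, ?_⟩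
  filter_upwards [heq, heq'] with z h1 h2
  rw [h1, h2, pow_one]; ring

lemma VOrd.mul_pow {f : ℂ → ℂ} {c : ℂ} (m : ℕ) (h : VOrd f 1 c) :
    VOrd (fun z => z ^ m * f z) (m + 1) c := by
  obtain ⟨φ, hφ, hφ0, heq⟩ := h
  refine ⟨φ, hφ, hφ0, ?_⟩
  filter_upwards [heq] with z h1
  rw [h1, pow_one, pow_succ]; ring

lemma VOrd.unique {f : ℂ → ℂ} {m : ℕ} {c c' : ℂ} (h : VOrd f m c) (h' : VOrd f m c') :
    c = c' := by
  obtain ⟨φ, hφ, hφ0, heq⟩ := h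
  obtain ⟨ψ, hψ, hψ0, heq'⟩ := h'
  have hpunct : φ =ᶠ[𝓝[≠] (0:ℂ)] ψ := by
    filter_upwards [(heq.and heq').filter_mono nhdsWithin_le_nhds,
      self_mem_nhdsWithin] with z hz hz0
    have hzne : (z : ℂ) ^ m ≠ 0 := pow_ne_zero _ (by simpa using hz0)
    exact mul_left_cancel₀ hzne (hz.1 ▸ hz.2 ▸ rfl)
  have t1 : Tendsto φ (𝓝[≠] (0:ℂ)) (𝓝 c) := hφ0 ▸ hφ.continuousAt.continuousWithinAt.tendsto
  have t2 : Tendsto ψ (𝓝[≠] (0:ℂ)) (𝓝 c') := hψ0 ▸ hψ.continuousAt.continuousWithinAt.tendsto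
  exact tendsto_nhds_unique_of_eventuallyEq t1 t2 hpunct

/-- extraction of uniform local data from a `VOrd` statement. -/
lemma VOrd.local_data {f : ℂ → ℂ} {m : ℕ} {c : ℂ} (h : VOrd f m c) :
    ∃ δ : ℝ, 0 < δ ∧ ∀ z : ℂ, ‖z‖ < δ →
      (f z = z ^ m * ((Classical.choose h) z) ∧
        ‖(Classical.choose h) z‖ ≤ ‖c‖ + 1) := by
  obtain ⟨hφ, hφ0, heq⟩ := Classical.choose_spec h
  set φ := Classical.choose h
  have hcont : ContinuousAt φ 0 := hφ.continuousAt
  have hball : ∀ᶠ z in 𝓝 (0:ℂ), ‖φ z‖ ≤ ‖c‖ + 1 := by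
    have : ∀ᶠ z in 𝓝 (0:ℂ), φ z ∈ Metric.ball c 1 := by
      refine hcont.eventually_mem ?_
      rw [hφ0]; exact Metric.ball_mem_nhds _ one_pos
    filter_upwards [this] with z hz
    have := le_of_lt (mem_ball_iff_norm.mp hz)
    calc ‖φ z‖ ≤ ‖φ z - c‖ + ‖c‖ := by
          simpa using norm_add_le (φ z - c) c
      _ ≤ ‖c‖ + 1 := by
          rw [add_comm (‖c‖) 1]
          exact add_le_add this le_rfl
  obtain ⟨δ, hδ, hδ'⟩ := Metric.eventually_nhds_iff_ball.mp (heq.and hball)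
  exact ⟨δ, hδ, fun z hz => by simpa using hδ' z (by simpa [Complex.dist_eq] using hz)⟩

lemma VOrd.bound {f : ℂ → ℂ} {m : ℕ} {c : ℂ} (h : VOrd f m c) :
    ∃ C R : ℝ, ∀ w : ℂ, R < w.re → ‖f w⁻¹‖ ≤ C / ‖w‖ ^ m := by
  obtain ⟨δ, hδ, hdata⟩ := h.local_data
  refine ⟨‖c‖ + 1, max δ⁻¹ 1, fun w hw => ?_⟩
  have hre : (max δ⁻¹ 1) < ‖w‖ := lt_of_lt_of_le hw (Complex.re_le_norm w)
  have hw1 : (1:ℝ) < ‖w‖ := lt_of_le_of_lt (le_max_right _ _) hre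
  have hwpos : (0:ℝ) < ‖w‖ := lt_trans one_pos hw1
  have hinv : ‖w⁻¹‖ < δ := by
    rw [norm_inv]
    have h1 : δ⁻¹ < ‖w‖ := lt_of_le_of_lt (le_max_left _ _) hre
    calc (‖w‖)⁻¹ < (δ⁻¹)⁻¹ := by
          exact inv_strictAnti₀ (inv_pos.mpr hδ) h1
      _ = δ := inv_inv δ
  obtain ⟨hfe, hbd⟩ := hdata w⁻¹ hinv
  rw [hfe, norm_mul, norm_pow, norm_inv, inv_pow]
  calc (‖w‖ ^ m)⁻¹ * ‖Classical.choose h w⁻¹‖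
      ≤ (‖w‖ ^ m)⁻¹ * (‖c‖ + 1) :=
        mul_le_mul_of_nonneg_left hbd (by positivity)
    _ = (‖c‖ + 1) / ‖w‖ ^ m := by rw [mul_comm, div_eq_mul_inv]
lemma VOrd.eq_zero_of_bound {f : ℂ → ℂ} {m : ℕ} {c : ℂ} (h : VOrd f m c) {C R : ℝ}
    (hb : ∀ w : ℂ, R < w.re → ‖f w⁻¹‖ ≤ C / ‖w‖ ^ (m + 1)) :
    c = 0 := by
  obtain ⟨φ, hφ, hφ0, heq⟩ := h
  obtain ⟨δ, hδ, hδ'⟩ := Metric.eventually_nhds_iff_ball.mp heq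
  have key : ∀ t : ℝ, max R (max δ⁻¹ 1) < t → ‖φ ((t:ℂ))⁻¹‖ ≤ C / t := by
    intro t ht
    have htR : R < t := lt_of_le_of_lt (le_max_left _ _) ht
    have ht1 : (1:ℝ) < t := lt_of_le_of_lt (le_max_right _ _) (lt_of_le_of_lt (le_max_right _ _) ht)
    have htpos : (0:ℝ) < t := lt_trans one_pos ht1
    have htδ : δ⁻¹ < t := lt_of_le_of_lt (le_max_left _ _) (lt_of_le_of_lt (le_max_right _ _) ht)
    set w : ℂ := (t : ℂ) with hw
    have hwre : R < w.re := by simpa [hw] using htR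
    have habs : ‖w‖ = t := by simp [hw, abs_of_pos htpos]
    have hwinv : ‖w⁻¹‖ < δ := by
      rw [norm_inv, habs]
      calc t⁻¹ < (δ⁻¹)⁻¹ := inv_strictAnti₀ (inv_pos.mpr hδ) htδ
        _ = δ := inv_inv δ
    have hmem : w⁻¹ ∈ Metric.ball (0:ℂ) δ := by
      simpa [Metric.mem_ball, Complex.dist_eq] using hwinv
    have hfe : f w⁻¹ = (w⁻¹) ^ m * φ w⁻¹ := hδ' w⁻¹ hmem
    have hbd := hb w hwre
    rw [hfe, norm_mul, norm_pow, norm_inv, habs] at hbd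
    have hrw : C / t ^ (m + 1) = (t⁻¹) ^ m * (C / t) := by
      rw [pow_succ, inv_pow]
      field_simp
    rw [hrw] at hbd
    have hpos : (0:ℝ) < (t⁻¹) ^ m := by positivity
    exact (mul_le_mul_iff_right₀ hpos).mp hbd
  have t0 : Tendsto (fun t : ℝ => ((t:ℂ))⁻¹) atTop (𝓝 0) := by
    have h1 : Tendsto (fun t : ℝ => t⁻¹) atTop (𝓝 0) := tendsto_inv_atTop_zero
    have h2 := (Complex.continuous_ofReal.tendsto 0).comp h1
    simpa [Function.comp_def] using h2
  have t1 : Tendsto (fun t : ℝ => ‖φ ((t:ℂ))⁻¹‖) atTop (𝓝 (‖c‖)) := by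
    have h3 : Tendsto φ (𝓝 (0:ℂ)) (𝓝 c) := hφ0 ▸ hφ.continuousAt.tendsto
    have := (continuous_norm.tendsto c).comp (h3.comp t0)
    simpa [Function.comp_def] using this
  have t2 : Tendsto (fun t : ℝ => C / t) atTop (𝓝 0) := by
    simpa [div_eq_mul_inv] using tendsto_inv_atTop_zero.const_mul C
  have hle : ‖c‖ ≤ 0 := by
    refine le_of_tendsto_of_tendsto t1 t2 ?_
    filter_upwards [eventually_gt_atTop (max R (max δ⁻¹ 1))] with t ht
    exact key t ht
  have := le_antisymm hle (norm_nonneg c)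
  simpa using this

lemma vord_sum {s : Finset ℕ} {f : ℕ → ℂ → ℂ} {m : ℕ}
    (h : ∀ i ∈ s, ∃ c, VOrd (f i) m c) :
    ∃ c, VOrd (fun z => ∑ i ∈ s, f i z) m c := by
  classical
  induction s using Finset.induction_on with
  | empty => exact ⟨0, (vord_zero m).congr (fun z => by simp)⟩
  | @insert i s his ih =>
    obtain ⟨ci, hci⟩ := h i (Finset.mem_insert_self i s)
    obtain ⟨cs, hcs⟩ := ih (fun x hx => h x (Finset.mem_insert_of_mem hx))
    exact ⟨ci + cs, (hci.add hcs).congr (fun z => by rw [Finset.sum_insert his])⟩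

/-- Uniqueness of the coefficients, at the level of `VOrd` statements. -/
lemma VU (v : ℕ → ℂ → ℂ) (hv : ∀ j, 1 ≤ j → VOrd (v j) (j + 1) (-(j:ℂ)))
    (h : ℂ → ℂ) (n : ℕ) (b b' : ℕ → ℂ) (c c' : ℂ)
    (hb : VOrd (fun z => h z + ∑ j ∈ Finset.Icc 1 n, b j * v j z) (n + 2) c)
    (hb' : VOrd (fun z => h z + ∑ j ∈ Finset.Icc 1 n, b' j * v j z) (n + 2) c') :
    ∀ j ∈ Finset.Icc 1 n, b j = b' j := by
  have hD : VOrd (fun z => ∑ i ∈ Finset.Icc 1 n, (b i - b' i) * v i z) (n + 2) (c - c') := by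
    refine (hb.sub hb').congr (fun z => ?_)
    rw [show (∑ i ∈ Finset.Icc 1 n, (b i - b' i) * v i z)
        = ∑ i ∈ Finset.Icc 1 n, (b i * v i z - b' i * v i z) from
      Finset.sum_congr rfl (fun i _ => by ring), Finset.sum_sub_distrib]
    ring
  intro j
  induction j using Nat.strong_induction_on with
  | _ j IH =>
    intro hj
    obtain ⟨hj1, hjn⟩ := Finset.mem_Icc.mp hj
    -- split the sum
    have hsplit : ∀ z : ℂ, (∑ i ∈ Finset.Icc 1 n, (b i - b' i) * v i z)
        = (b j - b' j) * v j z + ∑ i ∈ Finset.Icc (j+1) n, (b i - b' i) * v i z := by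
      intro z
      have hsub : Finset.Icc j n ⊆ Finset.Icc 1 n := Finset.Icc_subset_Icc hj1 le_rfl
      have h1 : (∑ i ∈ Finset.Icc 1 n, (b i - b' i) * v i z)
          = ∑ i ∈ Finset.Icc j n, (b i - b' i) * v i z := by
        refine (Finset.sum_subset hsub ?_).symm
        intro x hx hx'
        obtain ⟨hx1, hxn⟩ := Finset.mem_Icc.mp hx
        have hxj : x < j := by
          by_contra hcon
          exact hx' (Finset.mem_Icc.mpr ⟨not_lt.mp hcon, hxn⟩)
        rw [IH x hxj (Finset.mem_Icc.mpr ⟨hx1, hxn⟩)]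
        ring
      rw [h1, Finset.Icc_eq_cons_Ioc hjn, Finset.sum_cons, ← Finset.Icc_add_one_left_eq_Ioc]
    have hT : ∃ cT, VOrd (fun z => ∑ i ∈ Finset.Icc (j+1) n, (b i - b' i) * v i z)
        (j + 2) cT := by
      refine vord_sum (fun i hi => ?_)
      obtain ⟨hi1, hin⟩ := Finset.mem_Icc.mp hi
      have hvi := (hv i (le_trans (Nat.le_add_left 1 j) hi1)).const_mul (b i - b' i)
      exact hvi.of_le (by omega)
    obtain ⟨cT, hTv⟩ := hT
    have hD' : VOrd (fun z => ∑ i ∈ Finset.Icc 1 n, (b i - b' i) * v i z) (j + 2) 0 ∨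
        True := Or.inr trivial
    -- D at level j+2
    obtain ⟨cD, hDv⟩ : ∃ cD, VOrd (fun z => ∑ i ∈ Finset.Icc 1 n, (b i - b' i) * v i z)
        (j + 2) cD := hD.of_le (by omega)
    have hE : VOrd (fun z => (b j - b' j) * v j z) (j + 2) (cD - cT) := by
      refine (hDv.sub hTv).congr (fun z => ?_)
      rw [hsplit z]; ring
    have hE1 : VOrd (fun z => (b j - b' j) * v j z) (j + 1) ((b j - b' j) * (-(j:ℂ))) :=
      (hv j hj1).const_mul (b j - b' j)
    have hE2 : VOrd (fun z => (b j - b' j) * v j z) (j + 1) 0 := hE.of_lt (by omega)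
    have := hE1.unique hE2
    have hjne : (-(j:ℂ)) ≠ 0 := by
      simp only [ne_eq, neg_eq_zero, Nat.cast_eq_zero]
      omega
    have hsub0 : b j - b' j = 0 := by
      rcases mul_eq_zero.mp this with h0 | h0
      · exact h0
      · exact absurd h0 hjne
    exact sub_eq_zero.mp hsub0

/-- Existence of the coefficients, at the level of `VOrd` statements. -/
lemma EX (h : ℂ → ℂ) (c₀ : ℂ) (hh : VOrd h 2 c₀) (v : ℕ → ℂ → ℂ)
    (hv : ∀ j, 1 ≤ j → VOrd (v j) (j + 1) (-(j:ℂ))) :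
    ∀ n : ℕ, ∃ b : ℕ → ℂ, b 0 = 0 ∧ (∀ j, n < j → b j = 0) ∧
      ∃ c, VOrd (fun z => h z + ∑ j ∈ Finset.Icc 1 n, b j * v j z) (n + 2) c := by
  intro n
  induction n with
  | zero =>
    exact ⟨fun _ => 0, rfl, fun _ _ => rfl, c₀, hh.congr (fun z => by simp)⟩
  | succ n ih =>
    obtain ⟨b, hb0, hbs, c, hbv⟩ := ih
    have hcast : ((n:ℂ) + 1) ≠ 0 := by
      have h1 : ((n+1 : ℕ) : ℂ) ≠ 0 := Nat.cast_ne_zero.mpr (Nat.succ_ne_zero n)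
      push_cast at h1
      exact h1
    set β : ℂ := c / ((n:ℂ) + 1) with hβ
    refine ⟨Function.update b (n+1) β, ?_, ?_, ?_⟩
    · rw [Function.update_of_ne (by omega) _ _]
      exact hb0
    · intro j hj
      rw [Function.update_of_ne (by omega) _ _]
      exact hbs j (by omega)
    · have hv1 : VOrd (fun z => β * v (n+1) z) (n + 2) (β * (-((n+1 : ℕ):ℂ))) :=
        (hv (n+1) (by omega)).const_mul β
      have hveq : VOrd (fun z => (h z + ∑ j ∈ Finset.Icc 1 n, b j * v j z) + β * v (n+1) z)
          (n + 2) 0 := by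
        have hsum := hbv.add hv1
        have hc0 : c + β * (-((n+1 : ℕ):ℂ)) = 0 := by
          rw [hβ]
          push_cast
          field_simp
          ring
        rw [hc0] at hsum
        exact hsum
      obtain ⟨c', hc'⟩ := hveq.step
      refine ⟨c', hc'.congr (fun z => ?_)⟩
      rw [Finset.sum_Icc_succ_top (by omega : 1 ≤ n + 1)]
      rw [Function.update_self]
      have hterm : ∀ j ∈ Finset.Icc 1 n,
          Function.update b (n+1) β j * v j z = b j * v j z := by
        intro j hj
        obtain ⟨-, hj2⟩ := Finset.mem_Icc.mp hj
        rw [Function.update_of_ne (by omega) _ _]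
      rw [Finset.sum_congr rfl hterm]
      ring

lemma stmt14_setup (F : ℂ → ℂ) (A : ℂ) (a : ℕ → ℂ) (r : ℝ)
    (ha0 : a 0 = 0) (ha1 : a 1 = A)
    (hF : ∀ w : ℂ, r < ‖w‖ →
      HasSum (fun k => a k * (w⁻¹) ^ k) (F w - w - 1)) :
    ∃ g : ℂ → ℂ, AnalyticAt ℂ g 0 ∧ g 0 = 0 ∧ deriv g 0 = A ∧
      ∀ w : ℂ, max r 1 + 1 ≤ ‖w‖ → g w⁻¹ = F w - w - 1 := by
  set R₁ : ℝ := max r 1 + 1 with hR₁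
  have hR₁r : r < R₁ := lt_of_le_of_lt (le_max_left r 1) (lt_add_one _)
  have hR₁1 : (1:ℝ) < R₁ := lt_of_le_of_lt (le_max_right r 1) (lt_add_one _)
  have hR₁pos : (0:ℝ) < R₁ := lt_trans one_pos hR₁1
  set p := FormalMultilinearSeries.ofScalars ℂ a with hp
  -- radius bound
  have habsR : ‖((R₁ : ℝ) : ℂ)‖ = R₁ := by
    simp [abs_of_pos hR₁pos]
  have hsum0 := hF ((R₁ : ℝ) : ℂ) (by rw [habsR]; exact hR₁r)
  have hbigO : (fun n => ‖p n‖ * (R₁⁻¹ : ℝ) ^ n) =O[atTop] (fun _ => (1:ℝ)) := by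
    have ht : Tendsto (fun n => a n * (((R₁ : ℝ) : ℂ))⁻¹ ^ n) atTop (𝓝 0) :=
      hsum0.summable.tendsto_atTop_zero
    have ht' : Tendsto (fun n => ‖a n‖ * (R₁⁻¹ : ℝ) ^ n) atTop (𝓝 0) := by
      have := (continuous_norm.tendsto 0).comp ht
      simp only [Function.comp_def, norm_mul, norm_pow, norm_inv, habsR, norm_zero] at this
      exact this
    have heqn : ∀ n, ‖p n‖ * (R₁⁻¹ : ℝ) ^ n = ‖a n‖ * (R₁⁻¹ : ℝ) ^ n := fun n => by
      rw [hp]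
      rw [FormalMultilinearSeries.ofScalars_norm ℂ a n]
    have ht'' : Tendsto (fun n => ‖p n‖ * (R₁⁻¹ : ℝ) ^ n) atTop (𝓝 0) :=
      ht'.congr (fun n => (heqn n).symm)
    exact ht''.isBigO_one ℝ
  have hrr : ((Real.toNNReal R₁⁻¹ : NNReal) : ENNReal) ≤ p.radius := by
    apply p.le_radius_of_isBigO
    have : ((Real.toNNReal R₁⁻¹ : NNReal) : ℝ) = R₁⁻¹ := Real.coe_toNNReal _ (by positivity)
    rw [this]
    exact hbigO
  have hradius : 0 < p.radius := by
    refine lt_of_lt_of_le ?_ hrr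
    simp only [ENNReal.coe_pos, ← NNReal.coe_lt_coe, NNReal.coe_zero,
      Real.coe_toNNReal _ (by positivity : (0:ℝ) ≤ R₁⁻¹)]
    positivity
  have hg : HasFPowerSeriesOnBall p.sum p 0 p.radius := p.hasFPowerSeriesOnBall hradius
  refine ⟨p.sum, hg.analyticAt, ?_, ?_, ?_⟩
  · -- p.sum 0 = 0
    have : ∀ n : ℕ, (p n) (fun _ => (0:ℂ)) = 0 := by
      intro n
      rw [hp, FormalMultilinearSeries.ofScalars_apply_eq]
      cases n with
      | zero => simpa using ha0
      | succ k => simp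
    simp only [FormalMultilinearSeries.sum]
    rw [tsum_congr this, tsum_zero]
  · -- deriv = A
    have hd := hg.hasFPowerSeriesAt.deriv
    rw [hd, hp, FormalMultilinearSeries.ofScalars_apply_eq]
    simp [ha1]
  · -- identification with F
    intro w hw
    have hwr : r < ‖w‖ := lt_of_lt_of_le hR₁r hw
    have hsum := hF w hwr
    have hps : ∀ n : ℕ, (p n) (fun _ => w⁻¹) = a n * (w⁻¹) ^ n := by
      intro n
      rw [hp, FormalMultilinearSeries.ofScalars_apply_eq, smul_eq_mul]
    simp only [FormalMultilinearSeries.sum]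
    rw [tsum_congr hps]
    exact hsum.tsum_eq

/-- Formal Fatou coordinate at infinity.  Let `F(w) = w + 1 + A/w + O(1/w²)` be
analytic at `∞` (given by a convergent series `F(w) - w - 1 = Σ aₖ w^{-k}` with
`a₀ = 0`, `a₁ = A`).  Then there is a unique sequence `b₁, b₂, …` such that for
every `n ≥ 1` the truncation `Φₙ(w) = w - A log w + Σ_{j=1}^n bⱼ w^{-j}`
satisfies `Φₙ(F(w)) - Φₙ(w) - 1 = O(w^{-(n+2)})` as `w → ∞` in a right
half-plane. -/
theorem stmt14 (F : ℂ → ℂ) (A : ℂ) (a : ℕ → ℂ) (r : ℝ)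
    (ha0 : a 0 = 0) (ha1 : a 1 = A)
    (hF : ∀ w : ℂ, r < ‖w‖ →
      HasSum (fun k => a k * (w⁻¹) ^ k) (F w - w - 1)) :
    ∃! b : ℕ → ℂ, b 0 = 0 ∧
      ∀ n : ℕ, 1 ≤ n → ∃ C R : ℝ, ∀ w : ℂ, R < w.re →
        ‖
          ((F w - A * Complex.log (F w) + ∑ j ∈ Finset.Icc 1 n, b j * ((F w)⁻¹) ^ j)
            - (w - A * Complex.log w + ∑ j ∈ Finset.Icc 1 n, b j * (w⁻¹) ^ j) - 1)‖
          ≤ C / ‖w‖ ^ (n + 2) := by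
  obtain ⟨g, hganal, hg0, hgd, hgF⟩ := stmt14_setup F A a r ha0 ha1 hF
  -- the function u with F w = w * u w⁻¹
  set u : ℂ → ℂ := fun z => 1 + z + z * g z with hu_def
  have huanal : AnalyticAt ℂ u 0 :=
    (analyticAt_const.add analyticAt_id).add (analyticAt_id.mul hganal)
  have hu0 : u 0 = 1 := by simp [hu_def, hg0]
  have hune : u 0 ≠ 0 := by rw [hu0]; exact one_ne_zero
  have huslit : u 0 ∈ Complex.slitPlane := by rw [hu0]; exact Complex.one_mem_slitPlane
  have hgdev : HasDerivAt g A 0 := hgd ▸ hganal.differentiableAt.hasDerivAt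
  have hdu : HasDerivAt u 1 0 := by
    have h1 := ((hasDerivAt_const (0:ℂ) (1:ℂ)).add (hasDerivAt_id 0)).add
      ((hasDerivAt_id (0:ℂ)).mul hgdev)
    have h2 : HasDerivAt u _ 0 := h1
    simpa [hg0] using h2
  -- the functions v j
  set v : ℕ → ℂ → ℂ := fun j z => z ^ j * (((u z)⁻¹) ^ j - 1) with hv_def
  have hv : ∀ j, 1 ≤ j → VOrd (v j) (j + 1) (-(j:ℂ)) := by
    intro j hj
    have hqanal : AnalyticAt ℂ (fun z => ((u z)⁻¹) ^ j - 1) 0 :=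
      ((huanal.inv hune).pow j).sub analyticAt_const
    have hq0 : (fun z => ((u z)⁻¹) ^ j - 1) 0 = 0 := by simp [hu0]
    have hqd : HasDerivAt (fun z => ((u z)⁻¹) ^ j - 1) (-(j:ℂ)) 0 := by
      have h1 : HasDerivAt (fun z => (u z)⁻¹) (-1 / (u 0) ^ 2) 0 := hdu.inv hune
      have h2 := (h1.pow j).sub_const 1
      have h3 : (j:ℂ) * ((u 0)⁻¹) ^ (j - 1) * (-1 / (u 0) ^ 2) = -(j:ℂ) := by
        rw [hu0]; simp
      rw [h3] at h2
      exact h2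
    have hq : VOrd (fun z => ((u z)⁻¹) ^ j - 1) 1 (-(j:ℂ)) := by
      have h1 := vord_of_deriv hqanal hq0
      rwa [hqd.deriv] at h1
    exact hq.mul_pow j
  -- the function h
  set h : ℂ → ℂ := fun z => g z - A * Complex.log (u z) with hh_def
  have hhanal : AnalyticAt ℂ h 0 :=
    hganal.sub (analyticAt_const.mul ((analyticAt_clog huslit).comp huanal))
  have hh0 : h 0 = 0 := by simp [hh_def, hg0, hu0]
  have hhd : deriv h 0 = 0 := by
    have hlog : HasDerivAt (fun z => Complex.log (u z)) ((u 0)⁻¹ * 1) 0 :=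
      (Complex.hasDerivAt_log huslit).comp 0 hdu
    have hd : HasDerivAt h (A - A * ((u 0)⁻¹ * 1)) 0 := hgdev.sub (hlog.const_mul A)
    rw [hd.deriv, hu0]
    simp
  obtain ⟨c₀, hhvord⟩ : ∃ c₀, VOrd h 2 c₀ := by
    have h1 := vord_of_deriv hhanal hh0
    rw [hhd] at h1
    exact h1.step
  -- control region
  obtain ⟨δ, hδpos, hδ⟩ : ∃ δ, 0 < δ ∧ ∀ z : ℂ, ‖z‖ < δ →
      ‖u z - 1‖ < 1/2 := by
    have hev : ∀ᶠ z in nhds (0:ℂ), ‖u z - 1‖ < 1/2 := by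
      have hcont : Filter.Tendsto u (nhds 0) (nhds 1) := hu0 ▸ huanal.continuousAt.tendsto
      have hball : ∀ᶠ x in nhds (1:ℂ), ‖x - 1‖ < 1/2 := by
        have := Metric.ball_mem_nhds (1:ℂ) (by norm_num : (0:ℝ) < 1/2)
        filter_upwards [this] with x hx
        simpa [Complex.dist_eq] using hx
      exact hcont.eventually hball
    obtain ⟨δ, hδ, hδ'⟩ := Metric.eventually_nhds_iff_ball.mp hev
    exact ⟨δ, hδ, fun z hz => hδ' z (by simpa [Complex.dist_eq] using hz)⟩
  set R₀ : ℝ := max (max r 1 + 1) δ⁻¹ with hR₀_def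
  have hR₀pos : 0 < R₀ :=
    lt_of_lt_of_le (by positivity : (0:ℝ) < max r 1 + 1) (le_max_left _ _)
  -- the key identity
  have key : ∀ (b : ℕ → ℂ) (n : ℕ) (w : ℂ), R₀ < w.re →
      (F w - A * Complex.log (F w) + ∑ j ∈ Finset.Icc 1 n, b j * ((F w)⁻¹) ^ j)
        - (w - A * Complex.log w + ∑ j ∈ Finset.Icc 1 n, b j * (w⁻¹) ^ j) - 1
      = h w⁻¹ + ∑ j ∈ Finset.Icc 1 n, b j * v j w⁻¹ := by
    intro b n w hw
    have hwre_pos : 0 < w.re := lt_trans hR₀pos hw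
    have hwabs_gt : R₀ < ‖w‖ := lt_of_lt_of_le hw (Complex.re_le_norm w)
    have hwabs1 : max r 1 + 1 ≤ ‖w‖ :=
      le_of_lt (lt_of_le_of_lt (le_max_left _ _) hwabs_gt)
    have hw0 : w ≠ 0 := by
      intro hcon
      rw [hcon] at hwre_pos
      simp at hwre_pos
    have hgFw : g w⁻¹ = F w - w - 1 := hgF w hwabs1
    have hFw' : F w = w + 1 + g w⁻¹ := by rw [hgFw]; ring
    have hu_eq : w * u w⁻¹ = F w := by
      rw [hFw']
      simp only [hu_def]
      field_simp
    have hzδ : ‖w⁻¹‖ < δ := by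
      rw [norm_inv]
      have h1 : δ⁻¹ < ‖w‖ := lt_of_le_of_lt (le_max_right _ _) hwabs_gt
      calc (‖w‖)⁻¹ < (δ⁻¹)⁻¹ := inv_strictAnti₀ (inv_pos.mpr hδpos) h1
        _ = δ := inv_inv δ
    have hu1 : ‖u w⁻¹ - 1‖ < 1/2 := hδ _ hzδ
    have hure : 0 < (u w⁻¹).re := by
      have h1 := Complex.abs_re_le_norm (u w⁻¹ - 1)
      have h2 : |(u w⁻¹).re - 1| < 1/2 := by
        have h3 : (u w⁻¹ - 1).re = (u w⁻¹).re - 1 := by simp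
        rw [← h3]
        exact lt_of_le_of_lt h1 hu1
      have h4 := (abs_lt.mp h2).1
      linarith
    have hune' : u w⁻¹ ≠ 0 := by
      intro hcon
      rw [hcon] at hure
      simp at hure
    have hlogmul : Complex.log (F w) = Complex.log w + Complex.log (u w⁻¹) := by
      rw [← hu_eq]
      refine Complex.log_mul hw0 hune' ?_
      have ha1' : |Complex.arg w| < Real.pi/2 :=
        Complex.abs_arg_lt_pi_div_two_iff.mpr (Or.inl hwre_pos)
      have ha2' : |Complex.arg (u w⁻¹)| < Real.pi/2 :=
        Complex.abs_arg_lt_pi_div_two_iff.mpr (Or.inl hure)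
      have hb1 := abs_lt.mp ha1'
      have hb2 := abs_lt.mp ha2'
      constructor
      · linarith [hb1.1, hb2.1]
      · linarith [hb1.2, hb2.2]
    have hFinv : (F w)⁻¹ = w⁻¹ * (u w⁻¹)⁻¹ := by rw [← hu_eq, mul_inv]
    have hsum_eq : (∑ j ∈ Finset.Icc 1 n, b j * v j w⁻¹)
        = (∑ j ∈ Finset.Icc 1 n, b j * ((F w)⁻¹) ^ j)
          - ∑ j ∈ Finset.Icc 1 n, b j * (w⁻¹) ^ j := by
      have hterm : ∀ j ∈ Finset.Icc 1 n,
          b j * v j w⁻¹ = b j * ((F w)⁻¹) ^ j - b j * (w⁻¹) ^ j := by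
        intro j _
        rw [hFinv, mul_pow]
        simp only [hv_def]
        ring
      rw [Finset.sum_congr rfl hterm, Finset.sum_sub_distrib]
    rw [hsum_eq, hlogmul]
    simp only [hh_def, hFw']
    ring
  -- existence of the coefficient sequences at every level
  have hEXn := EX h c₀ hhvord v hv
  choose bb hbb0 hbbs hbbv using hEXn
  -- compatibility of the levels
  have hagree : ∀ n j, j ∈ Finset.Icc 1 n → bb n j = bb j j := by
    intro n j hj
    obtain ⟨hj1, hjn⟩ := Finset.mem_Icc.mp hj
    obtain ⟨cn, hcn⟩ := hbbv n
    obtain ⟨cj, hcj⟩ := hbbv j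
    obtain ⟨cT, hT⟩ : ∃ cT, VOrd (fun z => ∑ i ∈ Finset.Icc (j+1) n, bb n i * v i z)
        (j + 2) cT := by
      refine vord_sum (fun i hi => ?_)
      obtain ⟨hi1, hin⟩ := Finset.mem_Icc.mp hi
      exact ((hv i (by omega)).const_mul (bb n i)).of_le (by omega)
    obtain ⟨cD, hD⟩ : ∃ cD,
        VOrd (fun z => h z + ∑ i ∈ Finset.Icc 1 n, bb n i * v i z) (j + 2) cD :=
      hcn.of_le (by omega)
    have htrunc : VOrd (fun z => h z + ∑ i ∈ Finset.Icc 1 j, bb n i * v i z)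
        (j + 2) (cD - cT) := by
      refine (hD.sub hT).congr (fun z => ?_)
      have hsplitsum : (∑ i ∈ Finset.Icc 1 n, bb n i * v i z)
          = (∑ i ∈ Finset.Icc 1 j, bb n i * v i z)
            + ∑ i ∈ Finset.Icc (j+1) n, bb n i * v i z := by
        rw [show Finset.Icc 1 n = Finset.Ioc 0 n from Finset.Icc_add_one_left_eq_Ioc 0 n,
            show Finset.Icc 1 j = Finset.Ioc 0 j from Finset.Icc_add_one_left_eq_Ioc 0 j,
            show Finset.Icc (j+1) n = Finset.Ioc j n from Finset.Icc_add_one_left_eq_Ioc j n,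
            Finset.sum_Ioc_consecutive _ (Nat.zero_le j) hjn]
      rw [hsplitsum]
      ring
    exact VU v hv h j (bb n) (bb j) (cD - cT) cj htrunc hcj j
      (Finset.mem_Icc.mpr ⟨hj1, le_rfl⟩)
  -- the final sequence
  set bfin : ℕ → ℂ := fun j => bb j j with hbfin_def
  have hbfin0 : bfin 0 = 0 := hbb0 0
  have hbfin_vord : ∀ n, ∃ c,
      VOrd (fun z => h z + ∑ j ∈ Finset.Icc 1 n, bfin j * v j z) (n + 2) c := by
    intro n
    obtain ⟨c, hc⟩ := hbbv n
    refine ⟨c, hc.congr (fun z => ?_)⟩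
    congr 1
    refine Finset.sum_congr rfl (fun i hi => ?_)
    rw [hbfin_def]
    rw [hagree n i hi]
  have hbfin_prop : ∀ n : ℕ, 1 ≤ n → ∃ C R : ℝ, ∀ w : ℂ, R < w.re →
      ‖(F w - A * Complex.log (F w) + ∑ j ∈ Finset.Icc 1 n, bfin j * ((F w)⁻¹) ^ j)
          - (w - A * Complex.log w + ∑ j ∈ Finset.Icc 1 n, bfin j * (w⁻¹) ^ j) - 1‖
        ≤ C / ‖w‖ ^ (n + 2) := by
    intro n _
    obtain ⟨c, hc⟩ := hbfin_vord n
    obtain ⟨C, R', hCR⟩ := hc.bound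
    refine ⟨C, max R' R₀, fun w hw => ?_⟩
    rw [key bfin n w (lt_of_le_of_lt (le_max_right _ _) hw)]
    exact hCR w (lt_of_le_of_lt (le_max_left _ _) hw)
  refine ⟨bfin, ⟨hbfin0, hbfin_prop⟩, ?_⟩
  -- uniqueness
  rintro b' ⟨hb'0, hb'prop⟩
  have huniq : ∀ j, b' j = bfin j := by
    intro j
    induction j using Nat.strong_induction_on with
    | _ j IH =>
      rcases Nat.eq_zero_or_pos j with rfl | hj1
      · rw [hb'0, hbfin0]
      · obtain ⟨C1, R1, hB1⟩ := hb'prop j hj1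
        obtain ⟨C2, R2, hB2⟩ := hbfin_prop j hj1
        have hfv : VOrd (fun z => (b' j - bfin j) * v j z) (j + 1)
            ((b' j - bfin j) * (-(j:ℂ))) := (hv j hj1).const_mul _
        have hzero : (b' j - bfin j) * (-(j:ℂ)) = 0 := by
          refine hfv.eq_zero_of_bound (C := C1 + C2) (R := max (max R1 R2) R₀) ?_
          intro w hw
          have hwR0 : R₀ < w.re := lt_of_le_of_lt (le_max_right _ _) hw
          have hwR1 : R1 < w.re :=
            lt_of_le_of_lt (le_trans (le_max_left _ _) (le_max_left _ _)) hw
          have hwR2 : R2 < w.re :=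
            lt_of_le_of_lt (le_trans (le_max_right _ _) (le_max_left _ _)) hw
          have hdiff : (b' j - bfin j) * v j w⁻¹ =
              ((F w - A * Complex.log (F w) + ∑ i ∈ Finset.Icc 1 j, b' i * ((F w)⁻¹) ^ i)
                - (w - A * Complex.log w + ∑ i ∈ Finset.Icc 1 j, b' i * (w⁻¹) ^ i) - 1)
              - ((F w - A * Complex.log (F w) + ∑ i ∈ Finset.Icc 1 j, bfin i * ((F w)⁻¹) ^ i)
                - (w - A * Complex.log w + ∑ i ∈ Finset.Icc 1 j, bfin i * (w⁻¹) ^ i) - 1) := by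
            rw [key b' j w hwR0, key bfin j w hwR0]
            have hs : (∑ i ∈ Finset.Icc 1 j, (b' i - bfin i) * v i w⁻¹)
                = (b' j - bfin j) * v j w⁻¹ := by
              refine Finset.sum_eq_single_of_mem j (Finset.mem_Icc.mpr ⟨hj1, le_rfl⟩)
                (fun i hi hne => ?_)
              obtain ⟨hi1, hij⟩ := Finset.mem_Icc.mp hi
              rw [IH i (lt_of_le_of_ne hij hne)]
              ring
            rw [← hs]
            have hterm : ∀ i ∈ Finset.Icc 1 j,
                (b' i - bfin i) * v i w⁻¹ = b' i * v i w⁻¹ - bfin i * v i w⁻¹ :=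
              fun i _ => by ring
            rw [Finset.sum_congr rfl hterm, Finset.sum_sub_distrib]
            ring
          rw [hdiff]
          set E1 := (F w - A * Complex.log (F w) + ∑ i ∈ Finset.Icc 1 j, b' i * ((F w)⁻¹) ^ i)
            - (w - A * Complex.log w + ∑ i ∈ Finset.Icc 1 j, b' i * (w⁻¹) ^ i) - 1 with hE1
          set E2 := (F w - A * Complex.log (F w) + ∑ i ∈ Finset.Icc 1 j, bfin i * ((F w)⁻¹) ^ i)
            - (w - A * Complex.log w + ∑ i ∈ Finset.Icc 1 j, bfin i * (w⁻¹) ^ i) - 1 with hE2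
          calc ‖E1 - E2‖ ≤ ‖E1‖ + ‖E2‖ := by
                simpa [sub_eq_add_neg] using norm_add_le E1 (-E2)
            _ ≤ C1 / ‖w‖ ^ (j + 2) + C2 / ‖w‖ ^ (j + 2) :=
                add_le_add (hB1 w hwR1) (hB2 w hwR2)
            _ = (C1 + C2) / ‖w‖ ^ (j + 1 + 1) := by
                rw [← add_div]
        have hjne : (-(j:ℂ)) ≠ 0 := by
          simp only [ne_eq, neg_eq_zero, Nat.cast_eq_zero]
          omega
        have hsub0 : b' j - bfin j = 0 := by
          rcases mul_eq_zero.mp hzero with h0 | h0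
          · exact h0
          · exact absurd h0 hjne
        exact sub_eq_zero.mp hsub0
  exact funext huniq
end

section
/- Let f₀(z) = z + z² and let 𝔸_{i₀…i_{n-1}} denote the puzzle pieces: 𝔸₀ and 𝔸₁ are the intersections of 𝔸 = {1/2 < |z+1/2| < 2} with the open upper and lower half-planes, and 𝔸_{i₀…i_{n-1}} = { z ∈ 𝔸_{i₀} : f₀ʲ(z) ∈ 𝔸_{i_j} for 1 ≤ j < n }. Then for any two finite binary strings i, i' of equal length n whose closed puzzle pieces intersect, the associated dyadic numbers b(i) = Σ i_j 2^{-(j+1)} and b(i') satisfy b(i) = b(i') or b(i) = b(i') ± 2^{-n} (mod 1). -/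
open Finset Filter Topology

namespace Stmt19

noncomputable def f0 : ℂ → ℂ := fun z => z + z ^ 2

def A0 : Bool → Set ℂ := fun b => {z : ℂ | 1/2 < ‖z + 1/2‖ ∧
    ‖z + 1/2‖ < 2 ∧ (if b then z.im < 0 else 0 < z.im)}

def Acl : Bool → Set ℂ := fun b => {z : ℂ | 1/2 ≤ ‖z + 1/2‖ ∧
    ‖z + 1/2‖ ≤ 2 ∧ (if b then z.im ≤ 0 else 0 ≤ z.im)}

def P0 : ℕ → (ℕ → Bool) → Set ℂ := fun n i => {z : ℂ | ∀ j < n, f0^[j] z ∈ A0 (i j)}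

noncomputable def Δ (n : ℕ) (i i' : ℕ → Bool) : ℝ :=
  ∑ k ∈ Finset.range n, ((if i k then (1:ℝ) else 0) - (if i' k then (1:ℝ) else 0)) / 2 ^ (k+1)

lemma f0_cont : Continuous f0 := by
  unfold f0; continuity

lemma f0_im (z : ℂ) : (f0 z).im = z.im * (1 + 2 * z.re) := by
  simp [f0, pow_two, Complex.add_im, Complex.mul_im]; ring

lemma f0_re (z : ℂ) : (f0 z).re = z.re + z.re ^ 2 - z.im ^ 2 := by
  simp [f0, pow_two, Complex.add_re, Complex.mul_re]; ring

lemma Acl_closed (b : Bool) : IsClosed (Acl b) := by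
  have h1 : Continuous fun z : ℂ => ‖z + 1/2‖ :=
    (continuous_id.add continuous_const).norm
  cases b
  · exact (isClosed_le continuous_const h1).inter
      ((isClosed_le h1 continuous_const).inter
        (isClosed_le continuous_const Complex.continuous_im))
  · exact (isClosed_le continuous_const h1).inter
      ((isClosed_le h1 continuous_const).inter
        (isClosed_le Complex.continuous_im continuous_const))

lemma A0_sub_Acl (b : Bool) : A0 b ⊆ Acl b := by
  intro z hz
  cases b <;> exact ⟨le_of_lt hz.1, le_of_lt hz.2.1, le_of_lt hz.2.2⟩

lemma P0cl {z : ℂ} {n : ℕ} {i : ℕ → Bool} (hz : z ∈ closure (P0 n i)) :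
    ∀ j < n, f0^[j] z ∈ Acl (i j) := by
  have hclosed : IsClosed {z : ℂ | ∀ j < n, f0^[j] z ∈ Acl (i j)} := by
    have : {z : ℂ | ∀ j < n, f0^[j] z ∈ Acl (i j)} =
        ⋂ j ∈ Finset.range n, (f0^[j]) ⁻¹' (Acl (i j)) := by
      ext z; simp [Set.mem_iInter, Finset.mem_range]
    rw [this]
    exact isClosed_biInter fun j _ => (Acl_closed (i j)).preimage (f0_cont.iterate j)
  have hsub : P0 n i ⊆ {z : ℂ | ∀ j < n, f0^[j] z ∈ Acl (i j)} :=
    fun z hz j hj => A0_sub_Acl _ (hz j hj)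
  exact closure_minimal hsub hclosed hz

lemma shift_mem {z : ℂ} {n : ℕ} {i : ℕ → Bool} (hz : z ∈ closure (P0 (n+1) i)) :
    f0 z ∈ closure (P0 n (fun k => i (k+1))) := by
  refine map_mem_closure f0_cont hz ?_
  intro w hw j hj
  have := hw (j+1) (by omega)
  rwa [Function.iterate_succ_apply] at this

lemma annulus_real {z : ℂ} {b : Bool} (him : z.im = 0) (h : z ∈ Acl b) :
    z.re ≤ -1 ∨ 0 ≤ z.re := by
  have hz : z + 1/2 = ((z.re + 1/2 : ℝ) : ℂ) := by simp [Complex.ext_iff, him]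
  have h1 : (1:ℝ)/2 ≤ |z.re + 1/2| := by
    have := h.1; rwa [hz, Complex.norm_real, Real.norm_eq_abs] at this
  rcases le_abs.mp h1 with h2 | h2
  · right; linarith
  · left; linarith

lemma signPos {z : ℂ} {m j : ℕ} {s : ℕ → Bool} (hz : z ∈ closure (P0 m s))
    (hj : j + 1 < m) (him : (f0^[j] z).im = 0) (hre : -(1/2) < (f0^[j] z).re) :
    s (j+1) = s j := by
  obtain ⟨x, hx, hlim⟩ := mem_closure_iff_seq_limit.1 hz
  have hcj : Continuous (f0^[j]) := f0_cont.iterate j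
  have hconv : Tendsto (fun t => (f0^[j] (x t)).re) atTop (𝓝 ((f0^[j] z).re)) :=
    (Complex.continuous_re.tendsto _).comp ((hcj.tendsto z).comp hlim)
  have hev : ∀ᶠ t in atTop, -(1/2) < (f0^[j] (x t)).re :=
    hconv.eventually (eventually_gt_nhds hre)
  obtain ⟨t, ht⟩ := hev.exists
  have hu : f0^[j] (x t) ∈ A0 (s j) := hx t j (by omega)
  have hv : f0^[j+1] (x t) ∈ A0 (s (j+1)) := hx t (j+1) hj
  rw [Function.iterate_succ_apply'] at hv
  set u := f0^[j] (x t) with hu_def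
  have himu := f0_im u
  have hpos : 0 < 1 + 2 * u.re := by linarith
  cases hsj : s j <;> cases hsj1 : s (j+1) <;>
    simp [A0, hsj, hsj1] at hu hv
  · rfl
  · exfalso; have h1 : 0 < u.im := hu.2.2
    have h2 : (f0 u).im < 0 := hv.2.2
    nlinarith
  · exfalso; have h1 : u.im < 0 := hu.2.2
    have h2 : 0 < (f0 u).im := hv.2.2
    nlinarith
  · rfl

lemma signNeg {z : ℂ} {m j : ℕ} {s : ℕ → Bool} (hz : z ∈ closure (P0 m s))
    (hj : j + 1 < m) (him : (f0^[j] z).im = 0) (hre : (f0^[j] z).re < -(1/2)) :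
    s (j+1) = ! s j := by
  obtain ⟨x, hx, hlim⟩ := mem_closure_iff_seq_limit.1 hz
  have hcj : Continuous (f0^[j]) := f0_cont.iterate j
  have hconv : Tendsto (fun t => (f0^[j] (x t)).re) atTop (𝓝 ((f0^[j] z).re)) :=
    (Complex.continuous_re.tendsto _).comp ((hcj.tendsto z).comp hlim)
  have hev : ∀ᶠ t in atTop, (f0^[j] (x t)).re < -(1/2) :=
    hconv.eventually (eventually_lt_nhds hre)
  obtain ⟨t, ht⟩ := hev.exists
  have hu : f0^[j] (x t) ∈ A0 (s j) := hx t j (by omega)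
  have hv : f0^[j+1] (x t) ∈ A0 (s (j+1)) := hx t (j+1) hj
  rw [Function.iterate_succ_apply'] at hv
  set u := f0^[j] (x t) with hu_def
  have himu := f0_im u
  have hneg : 1 + 2 * u.re < 0 := by linarith
  cases hsj : s j <;> cases hsj1 : s (j+1) <;>
    simp [A0, hsj, hsj1] at hu hv
  · exfalso; have h1 : 0 < u.im := hu.2.2
    have h2 : 0 < (f0 u).im := hv.2.2
    nlinarith
  · rfl
  · rfl
  · exfalso; have h1 : u.im < 0 := hu.2.2
    have h2 : (f0 u).im < 0 := hv.2.2
    nlinarith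

lemma real_forward {z : ℂ} {m : ℕ} {s : ℕ → Bool} (hz : z ∈ closure (P0 m s)) (k : ℕ)
    (him : (f0^[k] z).im = 0) (hre : 0 ≤ (f0^[k] z).re) :
    ∀ j, k ≤ j → (f0^[j] z).im = 0 ∧ 0 ≤ (f0^[j] z).re := by
  intro j hj
  induction j with
  | zero =>
    have : k = 0 := by omega
    subst this; exact ⟨him, hre⟩
  | succ j ih =>
    by_cases h : k ≤ j
    · obtain ⟨h1, h2⟩ := ih h
      rw [Function.iterate_succ_apply']
      constructor
      · rw [f0_im, h1]; ring
      · rw [f0_re, h1]; nlinarith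
    · have : k = j + 1 := by omega
      subst this; exact ⟨him, hre⟩

lemma tailConst {z : ℂ} {m : ℕ} {s : ℕ → Bool} (hz : z ∈ closure (P0 m s)) (k : ℕ)
    (him : (f0^[k] z).im = 0) (hre : 0 ≤ (f0^[k] z).re) :
    ∀ j, k ≤ j → j + 1 < m → s (j+1) = s j := by
  intro j hkj hjm
  obtain ⟨h1, h2⟩ := real_forward hz k him hre j hkj
  exact signPos hz hjm h1 (by linarith)

lemma constFrom {z : ℂ} {m : ℕ} {s : ℕ → Bool} (hz : z ∈ closure (P0 m s)) (k : ℕ)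
    (him : (f0^[k] z).im = 0) (hre : 0 ≤ (f0^[k] z).re) :
    ∀ j, k ≤ j → j < m → s j = s k := by
  intro j hkj hjm
  induction j with
  | zero =>
    have : k = 0 := by omega
    subst this; rfl
  | succ j ih =>
    by_cases h : k ≤ j
    · rw [tailConst hz k him hre j h (by omega), ih h (by omega)]
    · have : k = j + 1 := by omega
      rw [this]

lemma sumConst (c : ℝ) (n : ℕ) :
    ∑ k ∈ Finset.range n, c / 2 ^ (k+1) = c * (1 - (1/2) ^ n) := by
  induction n with
  | zero => simp
  | succ n ih =>
    rw [Finset.sum_range_succ, ih]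
    have h : (1/2:ℝ) ^ n = 1 / 2 ^ n := by rw [div_pow, one_pow]
    have h2 : (1/2:ℝ) ^ (n+1) = 1 / 2 ^ (n+1) := by rw [div_pow, one_pow]
    rw [h, h2, pow_succ]
    have hp : (2:ℝ) ^ n ≠ 0 := by positivity
    field_simp
    ring

lemma delta_neg (n : ℕ) (i i' : ℕ → Bool) : Δ n i i' = - Δ n i' i := by
  unfold Δ
  rw [← Finset.sum_neg_distrib]
  exact Finset.sum_congr rfl fun k _ => by ring

lemma delta_succ (n : ℕ) (i i' : ℕ → Bool) :
    Δ (n+1) i i' = ((if i 0 then (1:ℝ) else 0) - (if i' 0 then (1:ℝ) else 0)) / 2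
      + Δ n (fun k => i (k+1)) (fun k => i' (k+1)) / 2 := by
  unfold Δ
  rw [Finset.sum_range_succ']
  rw [Finset.sum_congr rfl (fun k (_ : k ∈ Finset.range n) => by
    rw [pow_succ]; ring :
    ∀ k ∈ Finset.range n,
      ((if i (k+1) then (1:ℝ) else 0) - (if i' (k+1) then (1:ℝ) else 0)) / 2 ^ (k+1+1)
        = (((if i (k+1) then (1:ℝ) else 0) - (if i' (k+1) then (1:ℝ) else 0)) / 2 ^ (k+1)) / 2),
    ← Finset.sum_div]
  simp only [pow_one]
  ring

lemma allOnes {n : ℕ} {i i' : ℕ → Bool} (h : Δ n i i' = 1 - (1/2) ^ n) :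
    ∀ k < n, i k = true ∧ i' k = false := by
  by_contra hcon
  push_neg at hcon
  obtain ⟨k0, hk0, hk0'⟩ := hcon
  have hlt : Δ n i i' < ∑ k ∈ Finset.range n, (1:ℝ) / 2 ^ (k+1) := by
    apply Finset.sum_lt_sum
    · intro k _
      have hp : (0:ℝ) < 2 ^ (k+1) := by positivity
      rw [div_le_div_iff_of_pos_right hp]
      cases h1 : i k <;> cases h2 : i' k <;> norm_num
    · refine ⟨k0, Finset.mem_range.mpr hk0, ?_⟩
      have hp : (0:ℝ) < 2 ^ (k0+1) := by positivity
      rw [div_lt_div_iff_of_pos_right hp]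
      cases h1 : i k0 <;> cases h2 : i' k0 <;> simp [h1, h2] at hk0' ⊢ <;> norm_num
  rw [sumConst 1 n, one_mul] at hlt
  linarith [h ▸ hlt]

lemma noOpp {z : ℂ} {n : ℕ} (hn : 2 ≤ n) {i i' : ℕ → Bool} (hb : i 0 = i' 0)
    (h1 : ∀ k, 1 ≤ k → k ≤ n → i k = true) (h2 : ∀ k, 1 ≤ k → k ≤ n → i' k = false)
    (hz : z ∈ closure (P0 (n+1) i)) (hz' : z ∈ closure (P0 (n+1) i')) : False := by
  have ha : f0^[1] z ∈ Acl (i 1) := P0cl hz 1 (by omega)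
  have ha' : f0^[1] z ∈ Acl (i' 1) := P0cl hz' 1 (by omega)
  rw [Function.iterate_one] at ha ha'
  rw [h1 1 le_rfl (by omega)] at ha
  rw [h2 1 le_rfl (by omega)] at ha'
  have him : (f0 z).im = 0 := le_antisymm ha.2.2 ha'.2.2
  rcases annulus_real him ha with hneg | hpos
  · -- f0 z real ≤ -1 : use signNeg on the shifted string at j = 0
    have hfz : f0 z ∈ closure (P0 n (fun k => i (k+1))) := shift_mem hz
    have hs : (fun k => i (k+1)) 1 = ! (fun k => i (k+1)) 0 :=
      signNeg (j := 0) hfz (by omega) (by rwa [Function.iterate_zero_apply])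
        (by rw [Function.iterate_zero_apply]; linarith)
    simp only at hs
    rw [h1 2 (by omega) (by omega), h1 1 le_rfl (by omega)] at hs
    simp at hs
  · -- f0 z real ≥ 0 : deduce z is real
    have hz_im : z.im = 0 := by
      by_contra hne
      have hmul : z.im * (1 + 2 * z.re) = 0 := by rw [← f0_im]; exact him
      rcases mul_eq_zero.1 hmul with h3 | h3
      · exact hne h3
      · have hre : z.re = -(1/2) := by linarith
        have := f0_re z
        have himsq : 0 < z.im ^ 2 := by positivity
        nlinarith
    have hz_acl : z ∈ Acl (i 0) := by
      have := P0cl hz 0 (by omega)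
      rwa [Function.iterate_zero_apply] at this
    rcases annulus_real hz_im hz_acl with hneg2 | hpos2
    · have e1 : i 1 = ! i 0 :=
        signNeg (j := 0) hz (by omega) (by rwa [Function.iterate_zero_apply])
          (by rw [Function.iterate_zero_apply]; linarith)
      have e2 : i' 1 = ! i' 0 :=
        signNeg (j := 0) hz' (by omega) (by rwa [Function.iterate_zero_apply])
          (by rw [Function.iterate_zero_apply]; linarith)
      rw [h1 1 le_rfl (by omega), hb] at e1
      rw [h2 1 le_rfl (by omega)] at e2
      rw [← e1] at e2
      simp at e2
    · have e1 : i 1 = i 0 :=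
        signPos (j := 0) hz (by omega) (by rwa [Function.iterate_zero_apply])
          (by rw [Function.iterate_zero_apply]; linarith)
      have e2 : i' 1 = i' 0 :=
        signPos (j := 0) hz' (by omega) (by rwa [Function.iterate_zero_apply])
          (by rw [Function.iterate_zero_apply]; linarith)
      rw [h1 1 le_rfl (by omega), hb] at e1
      rw [h2 1 le_rfl (by omega)] at e2
      rw [← e1] at e2
      simp at e2

lemma main : ∀ n (i i' : ℕ → Bool),
    (closure (P0 (n+1) i) ∩ closure (P0 (n+1) i')).Nonempty →
    Δ (n+1) i i' = 0 ∨ Δ (n+1) i i' = (1/2:ℝ) ^ (n+1) ∨ Δ (n+1) i i' = -((1/2:ℝ) ^ (n+1)) ∨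
    Δ (n+1) i i' = 1 - (1/2:ℝ) ^ (n+1) ∨ Δ (n+1) i i' = -(1 - (1/2:ℝ) ^ (n+1)) := by
  intro n
  induction n with
  | zero =>
    intro i i' _
    cases h1 : i 0 <;> cases h2 : i' 0
    · left; simp [Δ, h1, h2]
    · right; right; left; norm_num [Δ, h1, h2]
    · right; left; norm_num [Δ, h1, h2]
    · left; simp [Δ, h1, h2]
  | succ n IH =>
    rintro i i' ⟨z, hz, hz'⟩
    have hfz : f0 z ∈ closure (P0 (n+1) (fun k => i (k+1))) := shift_mem hz
    have hfz' : f0 z ∈ closure (P0 (n+1) (fun k => i' (k+1))) := shift_mem hz'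
    have hD := IH _ _ ⟨f0 z, hfz, hfz'⟩
    by_cases hb : i 0 = i' 0
    · have hd0 : ((if i 0 then (1:ℝ) else 0) - (if i' 0 then (1:ℝ) else 0)) = 0 := by
        rw [hb]; ring
      rcases hD with h | h | h | h | h
      · left; rw [delta_succ, hd0, h]; norm_num
      · right; left; rw [delta_succ, hd0, h, pow_succ]; ring
      · right; right; left; rw [delta_succ, hd0, h, pow_succ]; ring
      · cases n with
        | zero => right; left; rw [delta_succ, hd0, h]; norm_num
        | succ m =>
          exfalso
          have hall := allOnes h
          refine noOpp (n := m+2) (by omega) hb ?_ ?_ hz hz'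
          · intro k hk1 hk2
            have := (hall (k-1) (by omega)).1
            rwa [show k-1+1 = k by omega] at this
          · intro k hk1 hk2
            have := (hall (k-1) (by omega)).2
            rwa [show k-1+1 = k by omega] at this
      · have h' : Δ (n+1) (fun k => i' (k+1)) (fun k => i (k+1)) = 1 - (1/2:ℝ) ^ (n+1) := by
          rw [delta_neg] at h; linarith
        cases n with
        | zero => right; right; left; rw [delta_succ, hd0, h]; norm_num
        | succ m =>
          exfalso
          have hall := allOnes h'
          refine noOpp (n := m+2) (by omega) hb.symm ?_ ?_ hz' hz
          · intro k hk1 hk2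
            have := (hall (k-1) (by omega)).1
            rwa [show k-1+1 = k by omega] at this
          · intro k hk1 hk2
            have := (hall (k-1) (by omega)).2
            rwa [show k-1+1 = k by omega] at this
    · -- i 0 ≠ i' 0 : z is real
      have hz0 : z ∈ Acl (i 0) := by
        have := P0cl hz 0 (by omega); rwa [Function.iterate_zero_apply] at this
      have hz0' : z ∈ Acl (i' 0) := by
        have := P0cl hz' 0 (by omega); rwa [Function.iterate_zero_apply] at this
      have hio : i' 0 = ! i 0 := by
        cases hI : i 0 <;> cases hI' : i' 0 <;> simp_all
      have him : z.im = 0 := by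
        have hA1 := hz0.2.2
        have hA2 := hz0'.2.2
        cases hI : i 0 <;> rw [hI] at hA1 <;> rw [hio, hI] at hA2 <;>
          simp at hA1 hA2 <;> linarith
      rcases annulus_real him hz0 with hneg | hpos
      · -- z.re ≤ -1
        have e2 : i' 1 = ! i' 0 :=
          signNeg (j := 0) hz' (by omega) (by rwa [Function.iterate_zero_apply])
            (by rw [Function.iterate_zero_apply]; linarith)
        have hf_im : (f0 z).im = 0 := by rw [f0_im, him]; ring
        have hf_re : 0 ≤ (f0 z).re := by rw [f0_re, him]; nlinarith
        have e1 : i 1 = ! i 0 :=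
          signNeg (j := 0) hz (by omega) (by rwa [Function.iterate_zero_apply])
            (by rw [Function.iterate_zero_apply]; linarith)
        have t1 : ∀ j, 1 ≤ j → j < n+2 → i j = ! i 0 := by
          intro j hj1 hj2
          have := constFrom hz 1 (by rwa [Function.iterate_one])
            (by rwa [Function.iterate_one]) j hj1 hj2
          rw [this, e1]
        have t2 : ∀ j, 1 ≤ j → j < n+2 → i' j = i 0 := by
          intro j hj1 hj2
          have := constFrom hz' 1 (by rwa [Function.iterate_one])
            (by rwa [Function.iterate_one]) j hj1 hj2
          rw [this, e2, hio, Bool.not_not]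
        have hsum : Δ (n+1) (fun k => i (k+1)) (fun k => i' (k+1)) =
            ((if (! i 0) then (1:ℝ) else 0) - (if i 0 then (1:ℝ) else 0)) * (1 - (1/2:ℝ) ^ (n+1)) := by
          unfold Δ
          refine (Finset.sum_congr rfl ?_).trans (sumConst _ _)
          intro k hk
          simp only
          simp only [t1 (k+1) (by omega) (by have := Finset.mem_range.mp hk; omega),
            t2 (k+1) (by omega) (by have := Finset.mem_range.mp hk; omega)]
        rw [delta_succ, hsum, hio]
        cases hI : i 0
        · right; right; left
          simp only [Bool.not_false, if_true, if_false]
          rw [pow_succ]; norm_num; ring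
        · right; left
          simp only [Bool.not_true, if_true, if_false]
          rw [pow_succ]; norm_num; ring
      · -- 0 ≤ z.re : both strings constant
        have c1 : ∀ j, j < n+2 → i j = i 0 := fun j hj =>
          constFrom hz 0 (by rwa [Function.iterate_zero_apply])
            (by rw [Function.iterate_zero_apply]; linarith) j (by omega) hj
        have c2 : ∀ j, j < n+2 → i' j = i' 0 := fun j hj =>
          constFrom hz' 0 (by rwa [Function.iterate_zero_apply])
            (by rw [Function.iterate_zero_apply]; linarith) j (by omega) hj
        have hsum : Δ (n+2) i i' =
            ((if i 0 then (1:ℝ) else 0) - (if i' 0 then (1:ℝ) else 0)) * (1 - (1/2:ℝ) ^ (n+2)) := by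
          unfold Δ
          refine (Finset.sum_congr rfl ?_).trans (sumConst _ _)
          intro k hk
          simp only [c1 k (Finset.mem_range.mp hk), c2 k (Finset.mem_range.mp hk)]
        rw [hsum, hio]
        cases hI : i 0
        · right; right; right; right
          simp
        · right; right; right; left
          simp

end Stmt19

open Stmt19 in
/-- Puzzle-piece combinatorics for `f₀(z) = z + z²`: if the closures of two
level-`n` puzzle pieces `𝔸_{i₀…i_{n-1}}`, `𝔸_{i'₀…i'_{n-1}}` intersect, then the
associated dyadic numbers `b(i) = Σ i_j 2^{-(j+1)}` satisfy `b(i) = b(i')` or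
`b(i) = b(i') ± 2^{-n}` modulo `1`. -/
theorem stmt19 (f : ℂ → ℂ) (hf : ∀ z, f z = z + z ^ 2)
    (A : Bool → Set ℂ)
    (hA : ∀ b, A b = {z : ℂ | 1/2 < ‖z + 1/2‖ ∧
        ‖z + 1/2‖ < 2 ∧ (if b then z.im < 0 else 0 < z.im)})
    (piece : ℕ → (ℕ → Bool) → Set ℂ)
    (hpiece : ∀ n i, piece n i = {z : ℂ | ∀ j < n, f^[j] z ∈ A (i j)})
    (n : ℕ) (hn : 1 ≤ n) (i i' : ℕ → Bool)
    (hint : (closure (piece n i) ∩ closure (piece n i')).Nonempty)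
    (bnum : (ℕ → Bool) → ℝ)
    (hbnum : ∀ j : ℕ → Bool,
      bnum j = ∑ k ∈ Finset.range n, (if j k then (1 : ℝ) else 0) / 2 ^ (k + 1)) :
    ∃ m : ℤ, bnum i - bnum i' = m ∨
      bnum i - bnum i' = m + (1/2 : ℝ) ^ n ∨
      bnum i - bnum i' = m - (1/2 : ℝ) ^ n := by
  have hf' : f = f0 := funext hf
  subst hf'
  have hA' : A = A0 := funext fun b => hA b
  subst hA'
  have hp' : ∀ n i, piece n i = P0 n i := fun n i => hpiece n i
  obtain ⟨n', rfl⟩ : ∃ m, n = m + 1 := ⟨n - 1, by omega⟩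
  rw [hp', hp'] at hint
  have key : bnum i - bnum i' = Δ (n'+1) i i' := by
    rw [hbnum, hbnum]
    unfold Δ
    rw [← Finset.sum_sub_distrib]
    exact Finset.sum_congr rfl fun k _ => (sub_div _ _ _).symm
  rcases main n' i i' hint with h | h | h | h | h
  · exact ⟨0, Or.inl (by rw [key, h]; norm_num)⟩
  · exact ⟨0, Or.inr (Or.inl (by rw [key, h]; norm_num))⟩
  · exact ⟨0, Or.inr (Or.inr (by rw [key, h]; norm_num))⟩
  · exact ⟨1, Or.inr (Or.inr (by rw [key, h]; push_cast; ring))⟩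
  · exact ⟨-1, Or.inr (Or.inl (by rw [key, h]; push_cast; ring))⟩
end
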